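/- arXiv:2605.07869 — 6 statements merged into one kernel-verified Lean document; each statement's English description precedes it below -/
import Mathlib

section
/- Let p be an odd prime and let j ≤ k be positive integers with 2j ≥ k. Then for every Dirichlet character χ modulo p^k there is a unique residue ℓ_χ ∈ ℤ/p^{k−j}ℤ such that χ(1 + p^j x) = e_{p^{k−j}}(ℓ_χ x) for all integers x, and the map χ ↦ ℓ_χ is a surjective group homomorphism from the group of Dirichlet characters modulo p^k onto the additive group ℤ/p^{k−j}ℤ. -/
open Complex

/-- `eN q x = e^{2πix/q}`. -/
noncomputable def eN (q : ℕ) (x : ℤ) : ℂ := Complex.exp (2 * Real.pi * Complex.I * x / q)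

lemma eN_zpow (N : ℕ) (x : ℤ) :
    eN N x = Complex.exp (2 * Real.pi * Complex.I / N) ^ x := by
  rw [← Complex.exp_int_mul, eN]
  ring_nf

lemma eN_congr {N : ℕ} (hN : N ≠ 0) {a b : ℤ} (h : (a : ZMod N) = b) :
    eN N a = eN N b := by
  have hζ := Complex.isPrimitiveRoot_exp N hN
  rw [eN_zpow, eN_zpow]
  have hd : (N : ℤ) ∣ a - b := by
    rwa [← ZMod.intCast_zmod_eq_zero_iff_dvd, Int.cast_sub, sub_eq_zero]
  have hne : Complex.exp (2 * Real.pi * Complex.I / N) ≠ 0 := Complex.exp_ne_zero _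
  have := (hζ.zpow_eq_one_iff_dvd (a - b)).mpr hd
  rwa [zpow_sub₀ hne, div_eq_one_iff_eq (zpow_ne_zero _ hne)] at this

lemma eN_inj {N : ℕ} (hN : N ≠ 0) {a b : ℤ} (h : eN N a = eN N b) :
    (a : ZMod N) = b := by
  have hζ := Complex.isPrimitiveRoot_exp N hN
  rw [eN_zpow, eN_zpow] at h
  have hne : Complex.exp (2 * Real.pi * Complex.I / N) ≠ 0 := Complex.exp_ne_zero _
  have h1 : Complex.exp (2 * Real.pi * Complex.I / N) ^ (a - b) = 1 := by
    rw [zpow_sub₀ hne, h, div_self (zpow_ne_zero _ hne)]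
  have hd := (hζ.zpow_eq_one_iff_dvd (a - b)).mp h1
  rwa [← sub_eq_zero, ← Int.cast_sub, ZMod.intCast_zmod_eq_zero_iff_dvd]

/-- Postnikov: the map `χ ↦ ℓ_χ` is a well-defined surjective homomorphism onto
`ℤ/p^{k-j}ℤ`. -/
theorem postnikov_hom (p j k : ℕ) (hp : p.Prime) (hodd : Odd p) (hj : 0 < j)
    (hjk : j ≤ k) (h2j : k ≤ 2 * j) :
    ∃ L : DirichletCharacter ℂ (p ^ k) → ZMod (p ^ (k - j)),
      (∀ χ : DirichletCharacter ℂ (p ^ k), ∀ x : ℤ,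
        χ ((1 + p ^ j * x : ℤ) : ZMod (p ^ k)) = eN (p ^ (k - j)) ((L χ).val * x)) ∧
      (∀ (χ : DirichletCharacter ℂ (p ^ k)) (ℓ : ZMod (p ^ (k - j))),
        (∀ x : ℤ, χ ((1 + p ^ j * x : ℤ) : ZMod (p ^ k)) = eN (p ^ (k - j)) ((ℓ.val : ℤ) * x))
          → ℓ = L χ) ∧
      (∀ χ₁ χ₂ : DirichletCharacter ℂ (p ^ k), L (χ₁ * χ₂) = L χ₁ + L χ₂) ∧
      Function.Surjective L := by
  have hp0 : (p : ℕ) ≠ 0 := hp.pos.ne'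
  set N : ℕ := p ^ (k - j) with hNdef
  have hN0 : N ≠ 0 := pow_ne_zero _ hp0
  have hNpos : 0 < N := Nat.pos_of_ne_zero hN0
  haveI : NeZero N := ⟨hN0⟩
  have hζ := Complex.isPrimitiveRoot_exp N hN0
  set ζ : ℂ := Complex.exp (2 * Real.pi * Complex.I / N) with hζdef
  -- the function f χ x = χ (1 + p^j x)
  set f : DirichletCharacter ℂ (p ^ k) → ℤ → ℂ :=
    fun χ x => χ ((1 + p ^ j * x : ℤ) : ZMod (p ^ k)) with hfdef
  -- p^k divides p^(2j)
  have hdvd : ((p : ℤ) ^ k) ∣ ((p : ℤ) ^ j * (p : ℤ) ^ j) := by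
    rw [← pow_add]
    exact pow_dvd_pow _ (by omega)
  have hcast : ∀ m : ℤ, ((p : ℤ) ^ k) ∣ m → ((m : ZMod (p ^ k)) = 0) := by
    intro m hm
    rwa [ZMod.intCast_zmod_eq_zero_iff_dvd, Nat.cast_pow]
  -- multiplicativity of f χ
  have hmul : ∀ χ : DirichletCharacter ℂ (p ^ k), ∀ x y : ℤ,
      f χ (x + y) = f χ x * f χ y := by
    intro χ x y
    have h0 : (((p:ℤ) ^ j * (p:ℤ) ^ j * (x * y) : ℤ) : ZMod (p ^ k)) = 0 := by
      rw [Int.cast_mul, hcast _ hdvd, zero_mul]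
    have key : ((1 + p ^ j * (x + y) : ℤ) : ZMod (p ^ k))
        = (((1 + p ^ j * x) * (1 + p ^ j * y) : ℤ) : ZMod (p ^ k)) := by
      calc ((1 + p ^ j * (x + y) : ℤ) : ZMod (p ^ k))
          = ((1 + p ^ j * (x + y) : ℤ) : ZMod (p ^ k))
            + (((p:ℤ) ^ j * (p:ℤ) ^ j * (x * y) : ℤ) : ZMod (p ^ k)) := by rw [h0, add_zero]
        _ = _ := by rw [← Int.cast_add]; congr 1; ring
    simp only [hfdef]
    rw [key, Int.cast_mul, map_mul]
  have hf0 : ∀ χ : DirichletCharacter ℂ (p ^ k), f χ 0 = 1 := by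
    intro χ
    simp [hfdef]
  -- periodicity
  have hper : ∀ χ : DirichletCharacter ℂ (p ^ k), ∀ x : ℤ, f χ (x + N) = f χ x := by
    intro χ x
    have key : ((1 + p ^ j * (x + N) : ℤ) : ZMod (p ^ k))
        = ((1 + p ^ j * x : ℤ) : ZMod (p ^ k)) := by
      have h1 : (1 + p ^ j * (x + N) : ℤ) = (1 + p ^ j * x) + (p:ℤ)^k := by
        have : ((p:ℤ) ^ j) * (N : ℤ) = (p:ℤ) ^ k := by
          rw [hNdef]
          push_cast
          rw [← pow_add]
          congr 1
          omega
        rw [mul_add, this]; ring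
      rw [h1, Int.cast_add, hcast _ dvd_rfl, add_zero]
    simp only [hfdef, key]
  -- f χ n = (f χ 1)^n for naturals
  have hfpow : ∀ χ : DirichletCharacter ℂ (p ^ k), ∀ n : ℕ, f χ n = (f χ 1) ^ n := by
    intro χ n
    induction n with
    | zero => simpa using hf0 χ
    | succ m ih =>
      have : ((m : ℤ) + 1) = ((m + 1 : ℕ) : ℤ) := by push_cast; ring
      rw [← this, hmul, ih, pow_succ]
  -- (f χ 1)^N = 1
  have hfN : ∀ χ : DirichletCharacter ℂ (p ^ k), (f χ 1) ^ N = 1 := by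
    intro χ
    rw [← hfpow]
    have := hper χ 0
    rw [zero_add] at this
    rw [this, hf0]
  have hfne : ∀ χ : DirichletCharacter ℂ (p ^ k), f χ 1 ≠ 0 := by
    intro χ h
    have := hfN χ
    rw [h, zero_pow hN0] at this
    exact one_ne_zero this.symm
  -- f χ x = (f χ 1)^x for integers
  have hfzpow : ∀ χ : DirichletCharacter ℂ (p ^ k), ∀ x : ℤ, f χ x = (f χ 1) ^ x := by
    intro χ x
    rcases x.eq_nat_or_neg with ⟨n, rfl | rfl⟩
    · rw [zpow_natCast, ← hfpow]
    · have h1 : f χ (-n) * f χ n = 1 := by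
        rw [← hmul]; simpa using hf0 χ
      have h2 : f χ (n : ℤ) = (f χ 1) ^ (n : ℤ) := by rw [zpow_natCast, ← hfpow]
      rw [zpow_neg, ← h2]
      exact eq_inv_of_mul_eq_one_left h1
  -- define L
  choose i hi hζi using fun χ : DirichletCharacter ℂ (p ^ k) =>
    hζ.eq_pow_of_pow_eq_one (hfN χ)
  set L : DirichletCharacter ℂ (p ^ k) → ZMod N := fun χ => (i χ : ZMod N) with hLdef
  have hLval : ∀ χ, ((L χ).val : ZMod N) = ((i χ : ℕ) : ZMod N) := by
    intro χ
    simp [hLdef, ZMod.natCast_val, ZMod.cast_id]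
  -- the main formula
  have hmain : ∀ χ : DirichletCharacter ℂ (p ^ k), ∀ x : ℤ,
      f χ x = eN N ((L χ).val * x) := by
    intro χ x
    rw [hfzpow, ← hζi χ, ← zpow_natCast ζ (i χ), ← zpow_mul]
    have h1 : eN N (((L χ).val : ℤ) * x) = eN N ((i χ : ℤ) * x) := by
      refine eN_congr hN0 ?_
      push_cast
      rw [hLval]
    rw [h1, eN_zpow]
  -- uniqueness
  have huniq : ∀ (χ : DirichletCharacter ℂ (p ^ k)) (ℓ : ZMod N),
      (∀ x : ℤ, f χ x = eN N ((ℓ.val : ℤ) * x)) → ℓ = L χ := by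
    intro χ ℓ h
    have h1 : eN N ((ℓ.val : ℤ) * 1) = eN N (((L χ).val : ℤ) * 1) := by
      rw [← h 1, hmain χ 1]
    have h2 := eN_inj hN0 h1
    have : ((ℓ.val : ℤ) : ZMod N) = (((L χ).val : ℤ) : ZMod N) := by
      simpa using h2
    rwa [Int.cast_natCast, Int.cast_natCast, ZMod.natCast_val, ZMod.natCast_val,
      ZMod.cast_id, ZMod.cast_id] at this
  -- homomorphism
  have hhom : ∀ χ₁ χ₂ : DirichletCharacter ℂ (p ^ k), L (χ₁ * χ₂) = L χ₁ + L χ₂ := by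
    intro χ₁ χ₂
    refine (huniq (χ₁ * χ₂) (L χ₁ + L χ₂) ?_).symm
    intro x
    have : f (χ₁ * χ₂) x = f χ₁ x * f χ₂ x := by
      simp [hfdef, MulChar.mul_apply]
    rw [this, hmain χ₁ x, hmain χ₂ x]
    have hadd : eN N (((L χ₁).val : ℤ) * x) * eN N (((L χ₂).val : ℤ) * x)
        = eN N ((((L χ₁).val : ℤ) + ((L χ₂).val : ℤ)) * x) := by
      rw [eN, eN, eN, ← Complex.exp_add]
      congr 1
      push_cast
      ring
    rw [hadd]
    refine eN_congr hN0 ?_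
    push_cast [ZMod.natCast_val, ZMod.cast_id]
    ring
  -- L of the trivial character is 0
  have hunit : ∀ x : ℤ, IsUnit ((1 + p ^ j * x : ℤ) : ZMod (p ^ k)) := by
    intro x
    have hnil : IsNilpotent (((p ^ j * x : ℤ)) : ZMod (p ^ k)) := by
      refine ⟨k, ?_⟩
      rw [← Int.cast_pow]
      refine hcast _ ?_
      have : ((p:ℤ) ^ j * x) ^ k = (p:ℤ)^(j*k) * x ^ k := by rw [mul_pow, ← pow_mul]
      rw [this]
      exact Dvd.dvd.mul_right (pow_dvd_pow _ (Nat.le_mul_of_pos_left k hj)) _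
    have := hnil.isUnit_one_add
    rwa [show ((1 + p ^ j * x : ℤ) : ZMod (p ^ k)) = 1 + ((p ^ j * x : ℤ) : ZMod (p ^ k)) by
      push_cast; ring]
  have hL1 : L 1 = 0 := by
    refine (huniq 1 0 ?_).symm
    intro x
    have : f 1 x = 1 := by
      simp only [hfdef]
      exact MulChar.one_apply (hunit x)
    rw [this]
    simp [eN, ZMod.val_zero]
  -- L of powers
  have hLpow : ∀ (χ : DirichletCharacter ℂ (p ^ k)) (n : ℕ), L (χ ^ n) = n • L χ := by
    intro χ n
    induction n with
    | zero => simpa using hL1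
    | succ m ih => rw [pow_succ, hhom, ih, succ_nsmul]
  -- surjectivity
  have hsurj : Function.Surjective L := by
    rcases eq_or_lt_of_le hjk with rfl | hlt
    · intro ℓ
      refine ⟨1, ?_⟩
      have : N = 1 := by simp [hNdef]
      haveI : Subsingleton (ZMod N) := by rw [this]; infer_instance
      exact Subsingleton.elim _ _
    · -- k > j; find χ with p ∤ (L χ).val
      have hk1 : 1 ≤ k - j := by omega
      have hNe : NeZero (p ^ k) := ⟨pow_ne_zero _ hp0⟩
      haveI : Fact (1 < p ^ k) := ⟨by
        have := hp.two_le
        calc 1 < p := hp.one_lt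
        _ ≤ p ^ k := Nat.le_self_pow (by omega) p⟩
      set a : ZMod (p ^ k) := ((1 + p ^ j * (p ^ (k - j - 1) : ℕ) : ℤ) : ZMod (p ^ k)) with hadef
      have ha1 : a ≠ 1 := by
        rw [hadef]
        intro h
        have : (((p:ℤ) ^ (k - 1) : ℤ) : ZMod (p ^ k)) = 0 := by
          have h2 : ((1 + p ^ j * (p ^ (k - j - 1) : ℕ) : ℤ) : ZMod (p ^ k)) - 1 = 0 := by
            rw [h, sub_self]
          have h3 : (1 + p ^ j * (p ^ (k - j - 1) : ℕ) : ℤ) = 1 + (p:ℤ) ^ (k - 1) := by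
            push_cast
            rw [← pow_add]
            congr 2
            omega
          rwa [h3, Int.cast_add, Int.cast_one, add_sub_cancel_left] at h2
        rw [ZMod.intCast_zmod_eq_zero_iff_dvd] at this
        have h5 : p ^ k ∣ p ^ (k - 1) := by exact_mod_cast this
        have hle := (Nat.pow_dvd_pow_iff_le_right hp.one_lt).mp h5
        omega
      obtain ⟨χ, hχ⟩ := DirichletCharacter.exists_apply_ne_one_of_hasEnoughRootsOfUnity ℂ ha1
      -- p does not divide (L χ).val
      have hnd : ¬ (p ∣ (L χ).val) := by
        intro hdvd'
        apply hχ
        have := hmain χ (p ^ (k - j - 1) : ℕ)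
        rw [hfdef] at this
        simp only at this
        rw [← hadef] at this
        rw [this]
        refine (eN_congr hN0 (b := 0) ?_).trans (by simp [eN])
        rw [Int.cast_zero, ZMod.intCast_zmod_eq_zero_iff_dvd]
        obtain ⟨c, hc⟩ := hdvd'
        rw [hc]
        push_cast
        have : ((p:ℤ) * c) * (p:ℤ) ^ (k - j - 1) = c * (p:ℤ) ^ (k - j) := by
          rw [show (p:ℤ) ^ (k-j) = (p:ℤ) * (p:ℤ)^(k-j-1) by rw [← pow_succ']; congr 1; omega]
          ring
        rw [this]
        exact ⟨c, by simp only [hNdef]; push_cast; ring⟩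
      have hcop : Nat.Coprime (L χ).val N :=
        Nat.Coprime.pow_right _ ((hp.coprime_iff_not_dvd.mpr hnd).symm)
      have hu : IsUnit ((((L χ).val : ℕ)) : ZMod N) := (ZMod.isUnit_iff_coprime _ _).mpr hcop
      rw [ZMod.natCast_val, ZMod.cast_id] at hu
      obtain ⟨v, hv⟩ := hu
      intro ℓ
      refine ⟨χ ^ ((ℓ * ↑v⁻¹).val), ?_⟩
      rw [hLpow, nsmul_eq_mul, ZMod.natCast_val, ZMod.cast_id, ← hv]
      rw [mul_assoc, Units.inv_mul, mul_one]
  exact ⟨L, fun χ x => hmain χ x, huniq, hhom, hsurj⟩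
end

section
/- Let p be an odd prime, let j ≤ k be positive integers with 2j ≥ k, and let χ₁, χ₂ be Dirichlet characters modulo p^k. For i = 1, 2 let ℓ_i be an integer such that χ_i(1 + p^j x) = e_{p^{k−j}}(ℓ_i x) for all integers x. Then for every integer j' with j ≤ j' ≤ k, the conductor of the character χ₁·χ₂⁻¹ (the product of χ₁ with the complex conjugate of χ₂, a character modulo p^k) divides p^{j'} if and only if ℓ₁ ≡ ℓ₂ (mod p^{k−j'}). -/
open Complex

lemma eN_eq_one_iff {q : ℕ} (hq : q ≠ 0) (x : ℤ) : eN q x = 1 ↔ (q : ℤ) ∣ x := by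
  have hq' : (q : ℂ) ≠ 0 := Nat.cast_ne_zero.mpr hq
  rw [eN, Complex.exp_eq_one_iff]
  constructor
  · rintro ⟨n, hn⟩
    refine ⟨n, ?_⟩
    have hx : (x : ℂ) = (q : ℂ) * n := by
      apply mul_left_cancel₀ Complex.two_pi_I_ne_zero
      field_simp at hn
      linear_combination (2 * (Real.pi : ℂ) * Complex.I) * hn
    exact_mod_cast hx
  · rintro ⟨m, rfl⟩
    refine ⟨m, ?_⟩
    push_cast
    field_simp

/-- Postnikov: the conductor of `χ₁ χ₂⁻¹` divides `p^{j'}` iff `ℓ₁ ≡ ℓ₂ (mod p^{k-j'})`. -/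
theorem conductor_dvd_iff_postnikov_congruence (p j k : ℕ) (hp : p.Prime) (hodd : Odd p)
    (hj : 0 < j) (hjk : j ≤ k) (h2j : k ≤ 2 * j)
    (χ₁ χ₂ : DirichletCharacter ℂ (p ^ k)) (ℓ₁ ℓ₂ : ℤ)
    (h₁ : ∀ x : ℤ, χ₁ ((1 + p ^ j * x : ℤ) : ZMod (p ^ k)) = eN (p ^ (k - j)) (ℓ₁ * x))
    (h₂ : ∀ x : ℤ, χ₂ ((1 + p ^ j * x : ℤ) : ZMod (p ^ k)) = eN (p ^ (k - j)) (ℓ₂ * x)) :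
    ∀ j' : ℕ, j ≤ j' → j' ≤ k →
      (DirichletCharacter.conductor (χ₁ * χ₂⁻¹) ∣ p ^ j' ↔
        ℓ₁ ≡ ℓ₂ [ZMOD (p ^ (k - j') : ℕ)]) := by
  intro j' hjj' hj'k
  haveI : NeZero (p ^ k) := ⟨pow_ne_zero _ hp.pos.ne'⟩
  set χ : DirichletCharacter ℂ (p ^ k) := χ₁ * χ₂⁻¹ with hχdef
  have hd : p ^ j' ∣ p ^ k := pow_dvd_pow p hj'k
  -- value of χ on 1 + p^j x
  have hval : ∀ x : ℤ, χ ((1 + p ^ j * x : ℤ) : ZMod (p ^ k)) = eN (p ^ (k - j)) ((ℓ₁ - ℓ₂) * x) := by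
    intro x
    rw [hχdef, MulChar.coeToFun_mul, Pi.mul_apply, MulChar.inv_apply_eq_inv', h₁, h₂]
    rw [eN, eN, eN, ← Complex.exp_neg, ← Complex.exp_add]
    congr 1
    push_cast
    ring
  -- units with value 1 + p^j x
  have hunit : ∀ x : ℤ, ∃ u : (ZMod (p ^ k))ˣ,
      (u : ZMod (p ^ k)) = ((1 + p ^ j * x : ℤ) : ZMod (p ^ k)) := by
    intro x
    have hmul : ∀ y z : ℤ, y * z = 1 - ((p : ℤ) ^ j * x) ^ 2 →
        ((y : ℤ) : ZMod (p ^ k)) * ((z : ℤ) : ZMod (p ^ k)) = 1 := by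
      intro y z hyz
      rw [← Int.cast_mul, ← Int.cast_one (R := ZMod (p ^ k)),
        ZMod.intCast_eq_intCast_iff, Int.modEq_iff_dvd, hyz]
      have h1 : (1 : ℤ) - (1 - ((p : ℤ) ^ j * x) ^ 2) = (p : ℤ) ^ (2 * j) * x ^ 2 := by
        rw [pow_mul']
        ring
      rw [h1]
      have : ((p ^ k : ℕ) : ℤ) = (p : ℤ) ^ k := by push_cast; ring
      rw [this]
      exact dvd_mul_of_dvd_left (pow_dvd_pow _ h2j) _
    refine ⟨⟨((1 + p ^ j * x : ℤ) : ZMod (p ^ k)), ((1 - p ^ j * x : ℤ) : ZMod (p ^ k)),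
      hmul _ _ (by ring), hmul _ _ (by ring)⟩, rfl⟩
  -- FactorsThrough iff trivial on 1 + p^{j'} ℤ
  have hpow : (p : ℤ) ^ j * (p : ℤ) ^ (j' - j) = (p : ℤ) ^ j' := by
    rw [← pow_add, Nat.add_sub_cancel' hjj']
  have hE : χ.FactorsThrough (p ^ j') ↔
      ∀ y : ℤ, χ ((1 + p ^ j' * y : ℤ) : ZMod (p ^ k)) = 1 := by
    rw [DirichletCharacter.factorsThrough_iff_ker_unitsMap hd]
    constructor
    · intro h y
      obtain ⟨u, hu⟩ := hunit ((p : ℤ) ^ (j' - j) * y)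
      have hu' : (u : ZMod (p ^ k)) = ((1 + p ^ j' * y : ℤ) : ZMod (p ^ k)) := by
        rw [hu]
        congr 1
        rw [← hpow]; ring
      have hker : u ∈ (ZMod.unitsMap hd).ker := by
        rw [MonoidHom.mem_ker, ZMod.unitsMap_def, ← Units.val_inj, Units.coe_map]
        show (ZMod.castHom hd (ZMod (p ^ j'))) (u : ZMod (p ^ k)) = 1
        rw [hu', map_intCast, ← Int.cast_one (R := ZMod (p ^ j')),
          ZMod.intCast_eq_intCast_iff, Int.modEq_iff_dvd]
        refine ⟨-y, ?_⟩
        push_cast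
        ring
      have := h hker
      rw [MonoidHom.mem_ker, ← Units.val_inj] at this
      rw [← hu']
      calc χ (u : ZMod (p ^ k)) = (χ.toUnitHom u : ℂ) := (MulChar.coe_toUnitHom χ u).symm
        _ = 1 := by rw [this, Units.val_one]
    · intro h u hu
      have ha : (((u : ZMod (p ^ k)).val : ℤ) : ZMod (p ^ k)) = (u : ZMod (p ^ k)) := by
        rw [Int.cast_natCast, ZMod.natCast_val, ZMod.cast_id]
      have h1 : (((u : ZMod (p ^ k)).val : ℤ) : ZMod (p ^ j')) = 1 := by
        rw [MonoidHom.mem_ker, ZMod.unitsMap_def, ← Units.val_inj, Units.coe_map] at hu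
        have : (ZMod.castHom hd (ZMod (p ^ j'))) (u : ZMod (p ^ k)) = 1 := hu
        rw [← ha, map_intCast] at this
        exact this
      rw [← Int.cast_one (R := ZMod (p ^ j')), ZMod.intCast_eq_intCast_iff,
        Int.modEq_iff_dvd] at h1
      obtain ⟨y, hy⟩ := h1
      have hy' : ((u : ZMod (p ^ k)).val : ℤ) = 1 + p ^ j' * (-y) := by
        have : ((p ^ j' : ℕ) : ℤ) = (p : ℤ) ^ j' := by push_cast; ring
        rw [this] at hy
        linarith [hy]
      rw [MonoidHom.mem_ker, ← Units.val_inj, Units.val_one]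
      have : (χ.toUnitHom u : ℂ) = χ (u : ZMod (p ^ k)) := MulChar.coe_toUnitHom χ u
      rw [this, ← ha, hy']
      exact h (-y)
  -- conductor dvd iff FactorsThrough
  have hcf : DirichletCharacter.conductor χ ∣ p ^ j' ↔ χ.FactorsThrough (p ^ j') := by
    constructor
    · intro h
      refine ⟨hd, DirichletCharacter.changeLevel h
        ((DirichletCharacter.factorsThrough_conductor χ).χ₀), ?_⟩
      rw [← DirichletCharacter.changeLevel_trans _ h hd]
      exact (DirichletCharacter.factorsThrough_conductor χ).eq_changeLevel
    · intro hft
      have hle : DirichletCharacter.conductor χ ≤ p ^ j' := Nat.sInf_le hft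
      obtain ⟨i, hik, hi⟩ := (Nat.dvd_prime_pow hp).mp (DirichletCharacter.conductor_dvd_level χ)
      rw [hi] at hle ⊢
      exact pow_dvd_pow p ((Nat.pow_le_pow_iff_right hp.one_lt).mp hle)
  -- arithmetic on eN values
  have hqne : (p : ℤ) ^ (k - j') ≠ 0 := pow_ne_zero _ (by exact_mod_cast hp.pos.ne')
  have hqne2 : (p : ℤ) ^ (j' - j) ≠ 0 := pow_ne_zero _ (by exact_mod_cast hp.pos.ne')
  have hsplit : (p : ℤ) ^ (k - j) = (p : ℤ) ^ (k - j') * (p : ℤ) ^ (j' - j) := by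
    rw [← pow_add]
    congr 1
    omega
  have hT : (∀ y : ℤ, χ ((1 + p ^ j' * y : ℤ) : ZMod (p ^ k)) = 1) ↔
      (p : ℤ) ^ (k - j') ∣ (ℓ₁ - ℓ₂) := by
    have hrw : ∀ y : ℤ, ((1 + p ^ j' * y : ℤ) : ZMod (p ^ k)) =
        ((1 + p ^ j * ((p : ℤ) ^ (j' - j) * y) : ℤ) : ZMod (p ^ k)) := by
      intro y
      congr 1
      rw [← mul_assoc, hpow]
    have hcast : ((p ^ (k - j) : ℕ) : ℤ) = (p : ℤ) ^ (k - j) := by push_cast; ring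
    constructor
    · intro h
      have := h 1
      rw [hrw, hval, eN_eq_one_iff (pow_ne_zero _ hp.pos.ne')] at this
      rw [hcast, hsplit, mul_one] at this
      exact (mul_dvd_mul_iff_right hqne2).mp this
    · intro h y
      rw [hrw, hval, eN_eq_one_iff (pow_ne_zero _ hp.pos.ne'), hcast, hsplit]
      obtain ⟨m, hm⟩ := h
      exact ⟨m * y, by rw [hm]; ring⟩
  have hcast2 : ((p ^ (k - j') : ℕ) : ℤ) = (p : ℤ) ^ (k - j') := by push_cast; ring
  rw [hcf, hE, hT, Int.modEq_iff_dvd, hcast2,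
    show (ℓ₂ - ℓ₁ : ℤ) = -(ℓ₁ - ℓ₂) from by ring, dvd_neg]
end

section
/- Let N ≥ 1 and let (a_n)_{n ∈ ℤ} be complex numbers with a_n = 0 unless 1 ≤ n ≤ N, and let H ≥ 1 be an integer. Then | Σ_n a_n |² ≤ (1 + N/H) · Σ_{|h| < H} (1 − |h|/H) Σ_{n ∈ ℤ} a_{n+h} · conj(a_n); in particular the right-hand side is a nonnegative real number. -/
open Complex

lemma vdc_count (H : ℕ) (h : ℤ) (hh : h ∈ Finset.Ioo (-(H:ℤ)) (H:ℤ)) :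
    ((Finset.range H ×ˢ Finset.range H).filter
      (fun p : ℕ × ℕ => (p.1 : ℤ) - p.2 = h)).card = H - h.natAbs := by
  rw [Finset.mem_Ioo] at hh
  rw [← Finset.card_range (H - h.natAbs)]
  apply Finset.card_nbij' (fun p : ℕ × ℕ => min p.1 p.2)
    (fun i => (i + h.toNat, i + (-h).toNat))
  · intro p hp
    simp only [Finset.mem_coe, Finset.mem_filter, Finset.mem_product, Finset.mem_range] at *
    omega
  · intro i hi
    simp only [Finset.mem_coe, Finset.mem_filter, Finset.mem_product, Finset.mem_range] at *
    omega
  · intro p hp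
    simp only [Finset.mem_coe, Finset.mem_filter, Finset.mem_product, Finset.mem_range] at hp
    obtain ⟨⟨h1, h2⟩, h3⟩ := hp
    ext <;> simp <;> omega
  · intro i hi
    simp only [Finset.mem_range] at *
    omega

/-- van der Corput shifting inequality (Lemma 4.1): the shifted-correlation expression is
a nonnegative real number bounding `|Σ a_n|²` (its imaginary part vanishes, and the
inequality holds for its real part). -/
theorem van_der_corput_shifting (N H : ℕ) (hN : 1 ≤ N) (hH : 1 ≤ H) (a : ℤ → ℂ)
    (ha : ∀ n : ℤ, a n ≠ 0 → 1 ≤ n ∧ n ≤ (N : ℤ)) :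
    ((1 + (N : ℂ) / H) * ∑ h ∈ Finset.Ioo (-(H : ℤ)) (H : ℤ),
        ((1 : ℂ) - ((|h| : ℤ) : ℂ) / H) * ∑' n : ℤ, a (n + h) * (starRingEnd ℂ) (a n)).im
      = 0 ∧
    ‖∑' n : ℤ, a n‖ ^ 2 ≤
      ((1 + (N : ℂ) / H) * ∑ h ∈ Finset.Ioo (-(H : ℤ)) (H : ℤ),
        ((1 : ℂ) - ((|h| : ℤ) : ℂ) / H) * ∑' n : ℤ, a (n + h) * (starRingEnd ℂ) (a n)).re := by
  set F : Finset ℤ := Finset.Icc (1:ℤ) (N:ℤ) with hF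
  set G : Finset ℤ := Finset.Icc (2 - (H:ℤ)) (N:ℤ) with hG
  have hA : ∀ n ∉ F, a n = 0 := by
    intro n hn
    by_contra hne
    exact hn (Finset.mem_Icc.mpr (ha n hne))
  set c : ℤ → ℂ := fun h => ∑ n ∈ F, a (n + h) * (starRingEnd ℂ) (a n) with hc
  set b : ℤ → ℂ := fun m => ∑ j ∈ Finset.range H, a (m + j) with hb
  have htsum : (∑' n : ℤ, a n) = ∑ n ∈ F, a n := tsum_eq_sum hA
  have hct : ∀ h : ℤ, (∑' n : ℤ, a (n + h) * (starRingEnd ℂ) (a n)) = c h := by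
    intro h
    exact tsum_eq_sum (fun n hn => by rw [hA n hn, map_zero, mul_zero])
  -- shift lemma
  have hshift : ∀ k : ℕ, k < H → ∀ g : ℤ → ℂ, (∀ n ∉ F, g n = 0) →
      ∑ m ∈ G, g (m + (k:ℤ)) = ∑ n ∈ F, g n := by
    intro k hk g hg
    have hmap : ∑ m ∈ G, g (m + (k:ℤ)) =
        ∑ n ∈ Finset.Icc (2 - (H:ℤ) + k) ((N:ℤ) + k), g n := by
      rw [← Finset.map_add_right_Icc, Finset.sum_map]
      rfl
    rw [hmap]
    refine (Finset.sum_subset ?_ ?_).symm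
    · intro n hn
      rw [Finset.mem_Icc] at *
      omega
    · intro n _ hn
      exact hg n (fun hnF => hn (by rw [Finset.mem_Icc] at *; omega))
  -- (A) sum of b
  have hsumb : ∑ m ∈ G, b m = (H:ℂ) * ∑ n ∈ F, a n := by
    rw [hb]
    rw [Finset.sum_comm]
    rw [Finset.sum_congr rfl (fun j hj => hshift j (Finset.mem_range.mp hj) a hA)]
    simp [Finset.sum_const, Finset.card_range]
  -- (B) sum of |b|^2
  set S : ℝ := ∑ m ∈ G, Complex.normSq (b m) with hS
  have hS0 : 0 ≤ S := Finset.sum_nonneg (fun m _ => Complex.normSq_nonneg _)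
  have hBsq : (S : ℂ) = ∑ h ∈ Finset.Ioo (-(H:ℤ)) (H:ℤ), ((H - h.natAbs : ℕ) : ℂ) * c h := by
    have e1 : (S : ℂ) = ∑ m ∈ G, b m * (starRingEnd ℂ) (b m) := by
      push_cast [hS]
      exact Finset.sum_congr rfl (fun m _ => (Complex.mul_conj (b m)).symm)
    have e2 : ∀ m : ℤ, b m * (starRingEnd ℂ) (b m) =
        ∑ p ∈ Finset.range H ×ˢ Finset.range H, a (m + p.1) * (starRingEnd ℂ) (a (m + p.2)) := by
      intro m
      rw [hb, map_sum, Finset.sum_mul_sum, ← Finset.sum_product']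
    have e3 : ∀ p : ℕ × ℕ, p ∈ Finset.range H ×ˢ Finset.range H →
        ∑ m ∈ G, a (m + p.1) * (starRingEnd ℂ) (a (m + p.2)) = c ((p.1 : ℤ) - p.2) := by
      intro p hp
      rw [Finset.mem_product, Finset.mem_range, Finset.mem_range] at hp
      calc ∑ m ∈ G, a (m + p.1) * (starRingEnd ℂ) (a (m + p.2))
          = ∑ m ∈ G, a ((m + (p.2:ℤ)) + ((p.1:ℤ) - p.2)) * (starRingEnd ℂ) (a (m + p.2)) := by
            refine Finset.sum_congr rfl (fun m _ => ?_)
            congr 2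
            ring
        _ = ∑ n ∈ F, a (n + ((p.1:ℤ) - p.2)) * (starRingEnd ℂ) (a n) :=
            hshift p.2 hp.2 (fun n => a (n + ((p.1:ℤ) - p.2)) * (starRingEnd ℂ) (a n))
              (fun n hn => by simp only [hA n hn, map_zero, mul_zero])
        _ = c ((p.1:ℤ) - p.2) := rfl
    calc (S : ℂ) = ∑ p ∈ Finset.range H ×ˢ Finset.range H,
          ∑ m ∈ G, a (m + p.1) * (starRingEnd ℂ) (a (m + p.2)) := by
          rw [e1, Finset.sum_congr rfl (fun m _ => e2 m), Finset.sum_comm]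
      _ = ∑ p ∈ Finset.range H ×ˢ Finset.range H, c ((p.1:ℤ) - p.2) :=
          Finset.sum_congr rfl e3
      _ = ∑ h ∈ Finset.Ioo (-(H:ℤ)) (H:ℤ), ((H - h.natAbs : ℕ) : ℂ) * c h := by
          rw [← Finset.sum_fiberwise_of_maps_to (g := fun p : ℕ × ℕ => (p.1:ℤ) - p.2)
            (t := Finset.Ioo (-(H:ℤ)) (H:ℤ))
            (fun p hp => by
              simp only [Finset.mem_product, Finset.mem_range] at hp
              simp only [Finset.mem_Ioo]
              omega)]
          refine Finset.sum_congr rfl (fun h hh => ?_)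
          have hterm : ∀ p ∈ (Finset.range H ×ˢ Finset.range H).filter
              (fun i : ℕ × ℕ => (i.1:ℤ) - i.2 = h), c ((p.1:ℤ) - p.2) = c h := by
            intro p hp
            simp only [Finset.mem_filter] at hp
            rw [hp.2]
          rw [Finset.sum_congr rfl hterm, Finset.sum_const, vdc_count H h hh, nsmul_eq_mul]
  have hHne : (H:ℂ) ≠ 0 := by
    simp only [ne_eq, Nat.cast_eq_zero]
    omega
  have hT : ∑ h ∈ Finset.Ioo (-(H:ℤ)) (H:ℤ), ((1:ℂ) - ((|h| : ℤ) : ℂ) / H) * c h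
      = (S : ℂ) / H := by
    rw [eq_div_iff hHne, Finset.sum_mul, hBsq]
    refine Finset.sum_congr rfl (fun h hh => ?_)
    rw [Finset.mem_Ioo] at hh
    have h1 : h.natAbs ≤ H := by omega
    have h2 : ((|h| : ℤ) : ℂ) = (h.natAbs : ℂ) := by
      rw [Int.abs_eq_natAbs, Int.cast_natCast]
    rw [h2]
    push_cast [h1]
    field_simp
  have hE : (1 + (N : ℂ) / H) * ∑ h ∈ Finset.Ioo (-(H : ℤ)) (H : ℤ),
        ((1 : ℂ) - ((|h| : ℤ) : ℂ) / H) * ∑' n : ℤ, a (n + h) * (starRingEnd ℂ) (a n)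
      = (((1 + (N:ℝ)/H) * (S / H) : ℝ) : ℂ) := by
    rw [Finset.sum_congr rfl (fun h _ => by rw [hct h]), hT]
    push_cast
    ring
  rw [hE]
  constructor
  · simp
  · rw [Complex.ofReal_re, htsum]
    set A : ℝ := ‖∑ n ∈ F, a n‖ with hAdef
    have hcard : (G.card : ℝ) = (N:ℝ) + H - 1 := by
      have hc1 : G.card = N + H - 1 := by rw [hG, Int.card_Icc]; omega
      rw [hc1]
      push_cast [Nat.cast_sub (by omega : 1 ≤ N + H)]
      ring
    have h1 : (H:ℝ) * A = ‖∑ m ∈ G, b m‖ := by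
      rw [hsumb, norm_mul, Complex.norm_natCast]
    have h2 : ‖∑ m ∈ G, b m‖ ≤ ∑ m ∈ G, ‖b m‖ :=
      norm_sum_le _ _
    have h3 : (∑ m ∈ G, ‖b m‖)^2 ≤ (G.card : ℝ) * S := by
      have hcs := Finset.sum_mul_sq_le_sq_mul_sq G (fun _ => (1:ℝ)) (fun m => ‖b m‖)
      simp only [one_mul, one_pow, Finset.sum_const, nsmul_eq_mul, mul_one] at hcs
      calc (∑ m ∈ G, ‖b m‖)^2 ≤ (G.card : ℝ) * ∑ m ∈ G, (‖b m‖)^2 :=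
            hcs
        _ = (G.card : ℝ) * S := by
            rw [hS]
            congr 1
            exact Finset.sum_congr rfl (fun m _ => Complex.sq_norm (b m))
    have hkey : ((H:ℝ) * A)^2 ≤ ((N:ℝ) + H - 1) * S := by
      rw [h1, ← hcard]
      calc (‖∑ m ∈ G, b m‖)^2 ≤ (∑ m ∈ G, ‖b m‖)^2 := by
            apply pow_le_pow_left₀ (norm_nonneg _) h2
        _ ≤ (G.card : ℝ) * S := h3
    have hH1 : (1:ℝ) ≤ H := by exact_mod_cast hH
    have hHpos : (0:ℝ) < H := by linarith
    have heq : (1 + (N:ℝ)/H) * (S / H) = (((H:ℝ) + N) * S) / H^2 := by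
      have hne : (H:ℝ) ≠ 0 := hHpos.ne'
      rw [show (1 + (N:ℝ)/H) = ((H:ℝ)+N)/H from by rw [add_div, div_self hne],
        div_mul_div_comm, ← pow_two]
    rw [heq, le_div_iff₀ (by positivity)]
    nlinarith [hkey, hS0]
end

section
/- Let N ≥ 1, let (a_n)_{n ∈ ℤ} be complex numbers with a_n = 0 unless 1 ≤ n ≤ N, and let H ≥ 1 be an integer. Define D_H(x) = Σ_{h=1}^{H} e(hx) and A(x) = Σ_{n} a_n e(nx), where e(x) = e^{2πix}. Then H² · | Σ_n a_n |² ≤ (N + H) · ∫_0^1 |D_H(x) A(x)|² dx. -/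
open Complex

private lemma integral_e (k : ℤ) :
    (∫ x in (0:ℝ)..1, Complex.exp (2 * Real.pi * Complex.I * k * x)) =
      if k = 0 then 1 else 0 := by
  rcases eq_or_ne k 0 with hk | hk
  · simp [hk]
  · have hc : (2 * (Real.pi : ℂ) * Complex.I * k) ≠ 0 := by
      have := Real.pi_ne_zero
      simp [Complex.I_ne_zero, hk, Complex.ofReal_ne_zero, this]
    rw [if_neg hk]
    have := integral_exp_mul_complex (a := (0:ℝ)) (b := 1) hc
    rw [this]
    have h1 : Complex.exp (2 * (Real.pi:ℂ) * Complex.I * k * (1:ℝ)) = 1 := by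
      rw [show (2 * (Real.pi:ℂ) * Complex.I * k * ((1:ℝ):ℂ)) = k * (2 * Real.pi * Complex.I) by push_cast; ring]
      exact Complex.exp_int_mul_two_pi_mul_I k
    rw [h1]
    simp

private lemma cont_e (z : ℂ) (k : ℤ) :
    Continuous fun x : ℝ => z * Complex.exp (2 * Real.pi * Complex.I * k * x) := by
  fun_prop

private lemma integral_ze (z : ℂ) (k : ℤ) :
    (∫ x in (0:ℝ)..1, z * Complex.exp (2 * Real.pi * Complex.I * k * x)) =
      if k = 0 then z else 0 := by
  rw [intervalIntegral.integral_const_mul, integral_e]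
  split <;> simp

/-- The amplified second-moment form of van der Corput's inequality:
`H² |Σ a_n|² ≤ (N+H) ∫₀¹ |D_H(x) A(x)|² dx`. -/
theorem van_der_corput_amplified (N H : ℕ) (hN : 1 ≤ N) (hH : 1 ≤ H) (a : ℤ → ℂ)
    (ha : ∀ n : ℤ, a n ≠ 0 → 1 ≤ n ∧ n ≤ (N : ℤ)) :
    (H : ℝ) ^ 2 * ‖∑' n : ℤ, a n‖ ^ 2 ≤
      ((N : ℝ) + H) * ∫ x in (0 : ℝ)..1,
        ‖((∑ h ∈ Finset.Icc 1 H, Complex.exp (2 * Real.pi * Complex.I * h * x)) *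
            ∑' n : ℤ, a n * Complex.exp (2 * Real.pi * Complex.I * n * x))‖ ^ 2 := by
  classical
  set S : Finset ℤ := Finset.Icc 1 (N : ℤ) with hSdef
  set M : Finset ℤ := Finset.Icc 2 ((N : ℤ) + H) with hMdef
  set c : ℤ → ℂ := fun m => ∑ h ∈ Finset.Icc 1 H, a (m - (h : ℤ)) with hcdef
  have ha0 : ∀ n ∉ S, a n = 0 := by
    intro n hn
    by_contra h
    exact hn (Finset.mem_Icc.mpr (ha n h))
  have hts : (∑' n : ℤ, a n) = ∑ n ∈ S, a n := tsum_eq_sum ha0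
  have htsx : ∀ x : ℝ,
      (∑' n : ℤ, a n * Complex.exp (2 * Real.pi * Complex.I * n * x)) =
        ∑ n ∈ S, a n * Complex.exp (2 * Real.pi * Complex.I * n * x) := by
    intro x
    refine tsum_eq_sum fun n hn => ?_
    rw [ha0 n hn, zero_mul]
  -- key pointwise identity
  have key : ∀ x : ℝ,
      (∑ h ∈ Finset.Icc 1 H, Complex.exp (2 * Real.pi * Complex.I * h * x)) *
        (∑ n ∈ S, a n * Complex.exp (2 * Real.pi * Complex.I * n * x)) =
      ∑ m ∈ M, c m * Complex.exp (2 * Real.pi * Complex.I * m * x) := by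
    intro x
    rw [Finset.sum_mul]
    have hterm : ∀ h ∈ Finset.Icc 1 H,
        Complex.exp (2 * Real.pi * Complex.I * h * x) *
            (∑ n ∈ S, a n * Complex.exp (2 * Real.pi * Complex.I * n * x)) =
          ∑ m ∈ M, a (m - (h : ℤ)) * Complex.exp (2 * Real.pi * Complex.I * m * x) := by
      intro h hh
      obtain ⟨hh1, hh2⟩ := Finset.mem_Icc.mp hh
      rw [Finset.mul_sum]
      have step1 : ∀ n ∈ S,
          Complex.exp (2 * Real.pi * Complex.I * h * x) *
              (a n * Complex.exp (2 * Real.pi * Complex.I * n * x)) =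
            a (n + (h:ℤ) - (h:ℤ)) * Complex.exp (2 * Real.pi * Complex.I * ((n + (h:ℤ)) : ℤ) * x) := by
        intro n _
        rw [add_sub_cancel_right, mul_left_comm, ← Complex.exp_add]
        congr 1
        push_cast
        ring
      rw [Finset.sum_congr rfl step1]
      have step2 : (∑ n ∈ S, a (n + (h:ℤ) - (h:ℤ)) *
            Complex.exp (2 * Real.pi * Complex.I * ((n + (h:ℤ)) : ℤ) * x)) =
          ∑ m ∈ Finset.Icc (1 + (h:ℤ)) ((N:ℤ) + h),
            a (m - (h:ℤ)) * Complex.exp (2 * Real.pi * Complex.I * m * x) := by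
        rw [hSdef, ← Finset.map_add_right_Icc, Finset.sum_map]
        simp [addRightEmbedding]
      rw [step2]
      refine Finset.sum_subset ?_ ?_
      · apply Finset.Icc_subset_Icc <;> push_cast <;> omega
      · intro m hm hm'
        have hmm : 2 ≤ m ∧ m ≤ (N:ℤ) + H := by rw [hMdef, Finset.mem_Icc] at hm; exact hm
        rw [Finset.mem_Icc] at hm'
        have : a (m - (h:ℤ)) = 0 := by
          apply ha0
          rw [hSdef, Finset.mem_Icc]
          omega
        rw [this, zero_mul]
    rw [Finset.sum_congr rfl hterm, Finset.sum_comm]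
    refine Finset.sum_congr rfl fun m _ => ?_
    rw [hcdef, Finset.sum_mul]
  -- evaluate at 0 : H * ∑ a = ∑ c
  have key0 : (H : ℂ) * (∑ n ∈ S, a n) = ∑ m ∈ M, c m := by
    have h0 := key 0
    simp only [Complex.ofReal_zero, mul_zero, Complex.exp_zero, mul_one,
      Finset.sum_const, nsmul_eq_mul, Nat.card_Icc] at h0
    rw [← h0]
    norm_num
  -- Parseval
  have conj_term : ∀ (x : ℝ) (z w : ℂ) (m m' : ℤ),
      (z * Complex.exp (2 * Real.pi * Complex.I * m * x)) *
        (starRingEnd ℂ) (w * Complex.exp (2 * Real.pi * Complex.I * m' * x)) =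
      (z * (starRingEnd ℂ) w) * Complex.exp (2 * Real.pi * Complex.I * ((m - m' : ℤ)) * x) := by
    intro x z w m m'
    rw [map_mul, ← Complex.exp_conj]
    have hconj : (starRingEnd ℂ) (2 * (Real.pi:ℂ) * Complex.I * m' * x) =
        2 * (Real.pi:ℂ) * (-Complex.I) * m' * x := by
      simp only [map_mul, Complex.conj_I, Complex.conj_ofReal, map_intCast, map_ofNat]
    rw [hconj, mul_mul_mul_comm, ← Complex.exp_add]
    congr 1
    push_cast
    ring
  have parseval : (∫ x in (0:ℝ)..1,
      (‖∑ m ∈ M, c m * Complex.exp (2 * Real.pi * Complex.I * m * x)‖ ^ 2 : ℝ)) =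
      ∑ m ∈ M, ‖c m‖ ^ 2 := by
    have expand : ∀ x : ℝ,
        ((‖∑ m ∈ M, c m * Complex.exp (2 * Real.pi * Complex.I * m * x)‖ ^ 2 : ℝ) : ℂ) =
        ∑ m ∈ M, ∑ m' ∈ M, (c m * (starRingEnd ℂ) (c m')) *
            Complex.exp (2 * Real.pi * Complex.I * ((m - m' : ℤ)) * x) := by
      intro x
      rw [Complex.sq_norm, ← Complex.mul_conj, map_sum, Finset.sum_mul_sum]
      exact Finset.sum_congr rfl fun m _ => Finset.sum_congr rfl fun m' _ =>
        conj_term x (c m) (c m') m m'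
    have hC : (∫ x in (0:ℝ)..1,
        ((‖∑ m ∈ M, c m * Complex.exp (2 * Real.pi * Complex.I * m * x)‖ ^ 2 : ℝ) : ℂ))
        = ((∑ m ∈ M, ‖c m‖ ^ 2 : ℝ) : ℂ) := by
      rw [intervalIntegral.integral_congr (g := fun x => ∑ m ∈ M, ∑ m' ∈ M,
        (c m * (starRingEnd ℂ) (c m')) * Complex.exp (2 * Real.pi * Complex.I * ((m - m' : ℤ)) * x))
        (fun x _ => expand x)]
      rw [intervalIntegral.integral_finset_sum (fun m _ => by
        apply Continuous.intervalIntegrable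
        exact continuous_finset_sum _ fun m' _ => cont_e _ _)]
      rw [Finset.sum_congr rfl (fun m (_ : m ∈ M) =>
        intervalIntegral.integral_finset_sum (fun m' _ => (cont_e _ _).intervalIntegrable _ _))]
      rw [Finset.sum_congr rfl (fun m (_ : m ∈ M) =>
        Finset.sum_congr rfl (fun m' (_ : m' ∈ M) =>
          integral_ze (c m * (starRingEnd ℂ) (c m')) (m - m')))]
      push_cast
      refine Finset.sum_congr rfl fun m hm => ?_
      simp only [sub_eq_zero]
      rw [Finset.sum_ite_eq M m (fun m' => c m * (starRingEnd ℂ) (c m')), if_pos hm,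
        Complex.mul_conj]
      norm_cast
      exact (Complex.sq_norm _).symm
    rw [intervalIntegral.integral_ofReal] at hC
    exact_mod_cast hC
  -- rewrite the RHS integral
  have hint : (∫ x in (0:ℝ)..1,
        ‖((∑ h ∈ Finset.Icc 1 H, Complex.exp (2 * Real.pi * Complex.I * h * x)) *
            ∑' n : ℤ, a n * Complex.exp (2 * Real.pi * Complex.I * n * x))‖ ^ 2) =
      ∑ m ∈ M, ‖c m‖ ^ 2 := by
    rw [← parseval]
    exact intervalIntegral.integral_congr fun x _ => by rw [htsx x, key x]
  rw [hts, hint]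
  -- final inequality
  have e1 : (H:ℝ)^2 * ‖∑ n ∈ S, a n‖^2 = ‖∑ m ∈ M, c m‖^2 := by
    rw [← key0, norm_mul, Complex.norm_natCast]
    ring
  have e2 : ‖∑ m ∈ M, c m‖ ≤ ∑ m ∈ M, ‖c m‖ :=
    norm_sum_le _ _
  have e2' : ‖∑ m ∈ M, c m‖^2 ≤ (∑ m ∈ M, ‖c m‖)^2 :=
    pow_le_pow_left₀ (norm_nonneg _) e2 2
  have e3 : (∑ m ∈ M, ‖c m‖)^2 ≤ (M.card : ℝ) * ∑ m ∈ M, ‖c m‖^2 :=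
    sq_sum_le_card_mul_sum_sq
  have hcard : (M.card : ℝ) ≤ (N : ℝ) + H := by
    have hcc : M.card = ((N:ℤ) + H + 1 - 2).toNat := by rw [hMdef, Int.card_Icc]
    have h1 : ((N:ℤ) + H + 1 - 2).toNat ≤ N + H := by omega
    rw [hcc]
    calc ((((N:ℤ)+H+1-2).toNat : ℝ)) ≤ ((N + H : ℕ) : ℝ) := by exact_mod_cast h1
      _ = (N:ℝ) + H := by push_cast; ring
  have e5 : (0:ℝ) ≤ ∑ m ∈ M, ‖c m‖^2 :=
    Finset.sum_nonneg fun m _ => by positivity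
  calc (H:ℝ)^2 * ‖∑ n ∈ S, a n‖^2 = ‖∑ m ∈ M, c m‖^2 := e1
    _ ≤ (∑ m ∈ M, ‖c m‖)^2 := e2'
    _ ≤ (M.card : ℝ) * ∑ m ∈ M, ‖c m‖^2 := e3
    _ ≤ ((N:ℝ) + H) * ∑ m ∈ M, ‖c m‖^2 := mul_le_mul_of_nonneg_right hcard e5
end

section
/- Let q be a positive integer, q₀ a positive divisor of q, χ a Dirichlet character modulo q, and (a_n)_{n ∈ ℤ} a finitely supported sequence of complex numbers. Then Σ_{ψ mod q₀} | Σ_{n ∈ ℤ} a_n (χ·ψ)(n) |² = φ(q₀) · Σ_{h ∈ ℤ} Σ_{n ∈ ℤ} a_{n + h q₀} · conj(a_n) · χ(n + h q₀) · conj(χ(n)), where the outer sum on the left runs over all Dirichlet characters ψ modulo q₀ and χ·ψ denotes the character modulo q obtained as the product of χ with the lift of ψ; in particular, | Σ_n a_n χ(n) |² is bounded by the left-hand side. -/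
open Complex

private lemma orth_aux {q₀ : ℕ} [NeZero q₀] (m n : ZMod q₀) (hn : IsUnit n) :
    ∑ ψ : DirichletCharacter ℂ q₀, ψ m * (starRingEnd ℂ) (ψ n)
      = if m = n then (q₀.totient : ℂ) else 0 := by
  have h1 : ∀ ψ : DirichletCharacter ℂ q₀, (starRingEnd ℂ) (ψ n) = ψ ↑hn.unit⁻¹ := by
    intro ψ
    rw [← Complex.star_def, MulChar.star_apply', MulChar.inv_apply]
    congr 1
    have h2 := Ring.inverse_unit hn.unit
    rwa [hn.unit_spec] at h2
  simp_rw [h1, ← map_mul, DirichletCharacter.sum_characters_eq, Units.mul_inv_eq_one,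
    IsUnit.unit_spec]
  congr

private lemma mul_changeLevel_apply {q q₀ : ℕ} [NeZero q] (hq₀ : q₀ ∣ q)
    (χ : DirichletCharacter ℂ q) (ψ : DirichletCharacter ℂ q₀) (n : ℤ) :
    (χ * DirichletCharacter.changeLevel hq₀ ψ) ((n : ℤ) : ZMod q)
      = χ ((n : ℤ) : ZMod q) * ψ ((n : ℤ) : ZMod q₀) := by
  rw [MulChar.mul_apply]
  by_cases h : IsUnit ((n : ℤ) : ZMod q)
  · congr 1
    rw [← h.unit_spec, DirichletCharacter.changeLevel_eq_cast_of_dvd ψ hq₀ h.unit]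
    congr 1
    rw [h.unit_spec]
    have := map_intCast (ZMod.castHom hq₀ (ZMod q₀)) n
    rwa [ZMod.castHom_apply] at this
  · rw [MulChar.map_nonunit χ h, zero_mul, zero_mul]

/-- Coset form of the `q`-van der Corput identity: squaring out the coset second moment
gives the shifted correlation sums, and, in particular, the single twisted sum is
bounded by the coset average. -/
theorem coset_second_moment_identity (q q₀ : ℕ) (hq : 0 < q) (hq₀ : q₀ ∣ q)
    (hq₀pos : 0 < q₀) (χ : DirichletCharacter ℂ q) (a : ℤ → ℂ)
    (ha : (Function.support a).Finite) :
    ((∑ ψ : DirichletCharacter ℂ q₀,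
        ‖∑' n : ℤ,
          a n * (χ * DirichletCharacter.changeLevel hq₀ ψ) ((n : ℤ) : ZMod q)‖ ^ 2 : ℝ) : ℂ)
      = (q₀.totient : ℂ) * ∑' h : ℤ, ∑' n : ℤ,
          a (n + h * q₀) * (starRingEnd ℂ) (a n) *
            χ ((n + h * q₀ : ℤ) : ZMod q) * (starRingEnd ℂ) (χ ((n : ℤ) : ZMod q)) ∧
    ‖∑' n : ℤ, a n * χ ((n : ℤ) : ZMod q)‖ ^ 2 ≤
      ∑ ψ : DirichletCharacter ℂ q₀,
        ‖∑' n : ℤ,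
          a n * (χ * DirichletCharacter.changeLevel hq₀ ψ) ((n : ℤ) : ZMod q)‖ ^ 2 := by
  haveI : NeZero q := ⟨hq.ne'⟩
  haveI : NeZero q₀ := ⟨hq₀pos.ne'⟩
  classical
  set c : ℤ → ℂ := fun n => a n * χ ((n : ℤ) : ZMod q) with hc
  set S : Finset ℤ := ha.toFinset with hSdef
  have hmem : ∀ n : ℤ, n ∉ S → a n = 0 := by
    intro n hn
    simpa [hSdef, Function.mem_support] using hn
  have hmem' : ∀ n : ℤ, a n ≠ 0 → n ∈ S := by
    intro n hn
    simp [hSdef, Function.mem_support, hn]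
  set H : Finset ℤ := (S ×ˢ S).image (fun p => (p.1 - p.2) / (q₀ : ℤ)) with hHdef
  have hq₀Z : (q₀ : ℤ) ≠ 0 := by exact_mod_cast hq₀pos.ne'
  -- twisted sums as finite sums
  have hts : ∀ ψ : DirichletCharacter ℂ q₀,
      (∑' n : ℤ, a n * (χ * DirichletCharacter.changeLevel hq₀ ψ) ((n : ℤ) : ZMod q))
        = ∑ n ∈ S, c n * ψ ((n : ℤ) : ZMod q₀) := by
    intro ψ
    rw [tsum_eq_sum (s := S) (fun n hn => by rw [hmem n hn, zero_mul])]
    exact Finset.sum_congr rfl fun n _ => by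
      rw [mul_changeLevel_apply hq₀, ← mul_assoc]
  have hone : ∀ z : ℂ, ((‖z‖ ^ 2 : ℝ) : ℂ) = z * (starRingEnd ℂ) z := fun z => by
    rw [Complex.sq_norm, Complex.mul_conj]
  constructor
  · -- the identity
    have hinner : ∀ h : ℤ,
        (∑' n : ℤ, a (n + h * q₀) * (starRingEnd ℂ) (a n) *
            χ ((n + h * q₀ : ℤ) : ZMod q) * (starRingEnd ℂ) (χ ((n : ℤ) : ZMod q)))
          = ∑ n ∈ S, c (n + h * q₀) * (starRingEnd ℂ) (c n) := by
      intro h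
      rw [tsum_eq_sum (s := S) (fun n hn => by rw [hmem n hn]; simp)]
      refine Finset.sum_congr rfl fun n _ => ?_
      simp only [hc, map_mul]
      ring
    have houter : ∀ h : ℤ, h ∉ H →
        (∑ n ∈ S, c (n + h * q₀) * (starRingEnd ℂ) (c n)) = 0 := by
      intro h hh
      refine Finset.sum_eq_zero fun n hn => ?_
      by_cases h1 : a (n + h * q₀) = 0
      · simp [hc, h1]
      · exfalso
        apply hh
        refine Finset.mem_image.mpr ⟨(n + h * q₀, n), Finset.mem_product.mpr ⟨hmem' _ h1, hn⟩, ?_⟩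
        simp only
        rw [add_sub_cancel_left]
        exact Int.mul_ediv_cancel h hq₀Z
    have htsum2 : (∑' h : ℤ, ∑' n : ℤ,
          a (n + h * q₀) * (starRingEnd ℂ) (a n) *
            χ ((n + h * q₀ : ℤ) : ZMod q) * (starRingEnd ℂ) (χ ((n : ℤ) : ZMod q)))
        = ∑ h ∈ H, ∑ n ∈ S, c (n + h * q₀) * (starRingEnd ℂ) (c n) := by
      rw [tsum_eq_sum (s := H) (fun h hh => by rw [hinner h]; exact houter h hh)]
      exact Finset.sum_congr rfl fun h _ => hinner h
    have hcomb : (∑ h ∈ H, ∑ n ∈ S, c (n + h * q₀) * (starRingEnd ℂ) (c n))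
        = ∑ m ∈ S, ∑ n ∈ S,
            (if ((m : ℤ) : ZMod q₀) = ((n : ℤ) : ZMod q₀)
              then c m * (starRingEnd ℂ) (c n) else 0) := by
      rw [Finset.sum_comm]
      conv_rhs => rw [Finset.sum_comm]
      refine Finset.sum_congr rfl fun n hn => ?_
      rw [← Finset.sum_filter, ← Finset.sum_mul, ← Finset.sum_mul]
      congr 1
      have himg : (∑ h ∈ H, c (n + h * q₀))
          = ∑ m ∈ H.image (fun h => n + h * (q₀ : ℤ)), c m := by
        refine (Finset.sum_image ?_).symm
        intro x _ y _ hxy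
        have : x * (q₀ : ℤ) = y * (q₀ : ℤ) := by
          have hxy' : n + x * (q₀ : ℤ) = n + y * (q₀ : ℤ) := hxy
          omega
        exact mul_right_cancel₀ hq₀Z this
      rw [himg]
      refine (Finset.sum_subset ?_ ?_).symm
      · intro m hm
        rw [Finset.mem_filter] at hm
        obtain ⟨hmS, hcong⟩ := hm
        have hdvd : (q₀ : ℤ) ∣ m - n := by
          have h2 := (ZMod.intCast_eq_intCast_iff m n q₀).mp hcong
          exact Int.ModEq.dvd h2.symm
        refine Finset.mem_image.mpr ⟨(m - n) / (q₀ : ℤ), ?_, ?_⟩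
        · exact Finset.mem_image.mpr ⟨(m, n), Finset.mem_product.mpr ⟨hmS, hn⟩, rfl⟩
        · have := Int.ediv_mul_cancel hdvd
          omega
      · intro m hm hnot
        obtain ⟨h, _, rfl⟩ := Finset.mem_image.mp hm
        by_cases hz : a (n + h * q₀) = 0
        · simp [hc, hz]
        · exfalso
          apply hnot
          refine Finset.mem_filter.mpr ⟨hmem' _ hz, ?_⟩
          push_cast [ZMod.natCast_self]
          ring
    -- expand the squares
    have expand : ∀ ψ : DirichletCharacter ℂ q₀,
        ((‖∑' n : ℤ,
            a n * (χ * DirichletCharacter.changeLevel hq₀ ψ) ((n : ℤ) : ZMod q)‖ ^ 2 : ℝ) : ℂ)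
          = ∑ m ∈ S, ∑ n ∈ S, (c m * (starRingEnd ℂ) (c n)) *
              (ψ ((m : ℤ) : ZMod q₀) * (starRingEnd ℂ) (ψ ((n : ℤ) : ZMod q₀))) := by
      intro ψ
      rw [hone, hts ψ, map_sum, Finset.sum_mul_sum]
      refine Finset.sum_congr rfl fun m _ => Finset.sum_congr rfl fun n _ => ?_
      rw [map_mul]
      ring
    have key : ∀ m n : ℤ,
        (c m * (starRingEnd ℂ) (c n)) *
            (∑ ψ : DirichletCharacter ℂ q₀,
              ψ ((m : ℤ) : ZMod q₀) * (starRingEnd ℂ) (ψ ((n : ℤ) : ZMod q₀)))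
          = (q₀.totient : ℂ) * (if ((m : ℤ) : ZMod q₀) = ((n : ℤ) : ZMod q₀)
              then c m * (starRingEnd ℂ) (c n) else 0) := by
      intro m n
      by_cases hu : IsUnit ((n : ℤ) : ZMod q₀)
      · rw [orth_aux _ _ hu]
        split <;> ring
      · have hn0 : c n = 0 := by
          have hq' : ¬ IsUnit ((n : ℤ) : ZMod q) := by
            intro hun
            apply hu
            have := hun.map (ZMod.castHom hq₀ (ZMod q₀))
            rwa [ZMod.castHom_apply, ← ZMod.castHom_apply (h := hq₀), map_intCast] at this
          simp [hc, MulChar.map_nonunit χ hq']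
        rw [hn0]
        simp
    calc ((∑ ψ : DirichletCharacter ℂ q₀,
            ‖∑' n : ℤ,
              a n * (χ * DirichletCharacter.changeLevel hq₀ ψ) ((n : ℤ) : ZMod q)‖ ^ 2 : ℝ) : ℂ)
        = ∑ ψ : DirichletCharacter ℂ q₀, ∑ m ∈ S, ∑ n ∈ S,
            (c m * (starRingEnd ℂ) (c n)) *
              (ψ ((m : ℤ) : ZMod q₀) * (starRingEnd ℂ) (ψ ((n : ℤ) : ZMod q₀))) := by
          rw [Complex.ofReal_sum]
          exact Finset.sum_congr rfl fun ψ _ => expand ψ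
      _ = ∑ m ∈ S, ∑ n ∈ S, (c m * (starRingEnd ℂ) (c n)) *
            (∑ ψ : DirichletCharacter ℂ q₀,
              ψ ((m : ℤ) : ZMod q₀) * (starRingEnd ℂ) (ψ ((n : ℤ) : ZMod q₀))) := by
          rw [Finset.sum_comm]
          refine Finset.sum_congr rfl fun m _ => ?_
          rw [Finset.sum_comm]
          exact Finset.sum_congr rfl fun n _ => (Finset.mul_sum _ _ _).symm
      _ = ∑ m ∈ S, ∑ n ∈ S, (q₀.totient : ℂ) *
            (if ((m : ℤ) : ZMod q₀) = ((n : ℤ) : ZMod q₀)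
              then c m * (starRingEnd ℂ) (c n) else 0) := by
          exact Finset.sum_congr rfl fun m _ => Finset.sum_congr rfl fun n _ => key m n
      _ = (q₀.totient : ℂ) * ∑ m ∈ S, ∑ n ∈ S,
            (if ((m : ℤ) : ZMod q₀) = ((n : ℤ) : ZMod q₀)
              then c m * (starRingEnd ℂ) (c n) else 0) := by
          simp_rw [Finset.mul_sum]
      _ = (q₀.totient : ℂ) * ∑' h : ℤ, ∑' n : ℤ,
            a (n + h * q₀) * (starRingEnd ℂ) (a n) *
              χ ((n + h * q₀ : ℤ) : ZMod q) * (starRingEnd ℂ) (χ ((n : ℤ) : ZMod q)) := by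
          rw [htsum2, hcomb]
  · -- the bound
    have h1 : χ * DirichletCharacter.changeLevel hq₀ (1 : DirichletCharacter ℂ q₀) = χ := by
      rw [map_one, mul_one]
    have := Finset.single_le_sum
      (f := fun ψ : DirichletCharacter ℂ q₀ =>
        ‖∑' n : ℤ,
          a n * (χ * DirichletCharacter.changeLevel hq₀ ψ) ((n : ℤ) : ZMod q)‖ ^ 2)
      (fun ψ _ => by positivity) (Finset.mem_univ (1 : DirichletCharacter ℂ q₀))
    simpa only [h1, ← hc] using this
end

section
/- For every ε > 0 there exists a constant C = C(ε) > 0 such that the following holds. Let q be an odd positive integer, q₀ a positive divisor of q, χ a primitive Dirichlet character of conductor q, and A ≥ 1 a real number. Define, for integers h, S(χ, h q₀, 0) = Σ_{α mod q} χ(α + h q₀) · conj(χ(α)). Then Σ_{1 ≤ |h| ≤ A} |S(χ, h q₀, 0)| ≤ C · q₀ · A · q^{ε}. -/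
open Complex Finset
open scoped Classical


lemma factor_bound_small (ε : ℝ) (hε : 0 < ε) (p a : ℕ) (hp : 2 ≤ p) :
    ((a + 1 : ℕ) : ℝ) ≤ (max 1 (1 / (ε * Real.log 2))) * (((p : ℝ) ^ ε) ^ a) := by
  set c : ℝ := ε * Real.log 2 with hc
  have hc0 : 0 < c := mul_pos hε (Real.log_pos one_lt_two)
  set B : ℝ := max 1 (1 / c) with hB
  have hB1 : 1 ≤ B := le_max_left _ _
  have hBc : 1 ≤ B * c := by
    have : 1 / c ≤ B := le_max_right _ _
    calc (1 : ℝ) = (1 / c) * c := by field_simp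
      _ ≤ B * c := mul_le_mul_of_nonneg_right this hc0.le
  have h2e : (2 : ℝ) ^ ε = Real.exp c := by
    rw [Real.rpow_def_of_pos two_pos, hc]; ring_nf
  have hpe : (2 : ℝ) ^ ε ≤ (p : ℝ) ^ ε := by
    apply Real.rpow_le_rpow (by norm_num) (by exact_mod_cast hp) hε.le
  have hexp : Real.exp c ^ a = Real.exp (c * a) := by
    rw [← Real.exp_nat_mul]; ring_nf
  have key : ((a + 1 : ℕ) : ℝ) ≤ B * ((2 : ℝ) ^ ε) ^ a := by
    rw [h2e, hexp]
    have h1 : 1 + c * a ≤ Real.exp (c * a) := by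
      have := Real.add_one_le_exp (c * a); linarith
    have h2 : ((a + 1 : ℕ) : ℝ) ≤ B * (1 + c * a) := by
      push_cast
      have ha : (0 : ℝ) ≤ a := Nat.cast_nonneg a
      nlinarith [mul_le_mul_of_nonneg_right hBc ha]
    calc ((a + 1 : ℕ) : ℝ) ≤ B * (1 + c * a) := h2
      _ ≤ B * Real.exp (c * a) := by
          apply mul_le_mul_of_nonneg_left h1 (by linarith)
  calc ((a + 1 : ℕ) : ℝ) ≤ B * ((2 : ℝ) ^ ε) ^ a := key
    _ ≤ B * ((p : ℝ) ^ ε) ^ a := by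
        apply mul_le_mul_of_nonneg_left _ (by linarith)
        exact pow_le_pow_left₀ (Real.rpow_nonneg (by norm_num) _) hpe a

lemma factor_bound_large (ε : ℝ) (hε : 0 < ε) (p a : ℕ)
    (hp : (2 : ℝ) ^ (1 / ε) ≤ (p : ℝ)) :
    ((a + 1 : ℕ) : ℝ) ≤ ((p : ℝ) ^ ε) ^ a := by
  have h2 : (2 : ℝ) ≤ (p : ℝ) ^ ε := by
    have h1 : ((2 : ℝ) ^ (1 / ε)) ^ ε ≤ (p : ℝ) ^ ε :=
      Real.rpow_le_rpow (Real.rpow_nonneg (by norm_num) _) hp hε.le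
    rwa [← Real.rpow_mul (by norm_num : (0:ℝ) ≤ 2), one_div_mul_cancel hε.ne',
      Real.rpow_one] at h1
  calc ((a + 1 : ℕ) : ℝ) ≤ (2 : ℝ) ^ a := by exact_mod_cast Nat.succ_le_of_lt ((Nat.lt_two_pow_self (n := a)))
    _ ≤ ((p : ℝ) ^ ε) ^ a := pow_le_pow_left₀ (by norm_num) h2 a

lemma div_bound (ε : ℝ) (hε : 0 < ε) : ∃ C : ℝ, 0 < C ∧ ∀ n : ℕ, n ≠ 0 →
    ((n.divisors.card : ℝ)) ≤ C * (n : ℝ) ^ ε := by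
  classical
  set B : ℝ := max 1 (1 / (ε * Real.log 2)) with hB
  have hB1 : 1 ≤ B := le_max_left _ _
  set K : ℕ := ⌈(2 : ℝ) ^ (1 / ε)⌉₊ with hK
  refine ⟨B ^ (K + 1), pow_pos (by linarith) _, ?_⟩
  intro n hn
  -- express τ and n^ε as products over prime factors
  have hτ : (n.divisors.card : ℝ)
      = ∏ p ∈ n.primeFactors, ((n.factorization p + 1 : ℕ) : ℝ) := by
    rw [Nat.card_divisors hn]; push_cast; rfl
  have hnε : (n : ℝ) ^ ε = ∏ p ∈ n.primeFactors, ((p : ℝ) ^ ε) ^ (n.factorization p) := by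
    have h0 : ∏ p ∈ n.primeFactors, p ^ n.factorization p = n := by
      rw [← Nat.prod_factorization_eq_prod_primeFactors (fun p k => p ^ k)]
      exact Nat.factorization_prod_pow_eq_self hn
    have h1 : (n : ℝ) = ∏ p ∈ n.primeFactors, (p : ℝ) ^ (n.factorization p) := by
      exact_mod_cast congrArg (fun m : ℕ => (m : ℝ)) h0.symm
    rw [h1, ← Real.finset_prod_rpow _ _ (fun p _ => by positivity) ε]
    apply Finset.prod_congr rfl
    intro p hp
    have hp0 : (0 : ℝ) ≤ (p : ℝ) := Nat.cast_nonneg p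
    rw [← Real.rpow_natCast ((p : ℝ)) (n.factorization p), ← Real.rpow_mul hp0,
      mul_comm, Real.rpow_mul hp0, Real.rpow_natCast]
  -- pointwise bound
  have hpoint : ∀ p ∈ n.primeFactors, ((n.factorization p + 1 : ℕ) : ℝ)
      ≤ (if p ≤ K then B else 1) * ((p : ℝ) ^ ε) ^ (n.factorization p) := by
    intro p hp
    have hp2 : 2 ≤ p := (Nat.prime_of_mem_primeFactors hp).two_le
    by_cases hpK : p ≤ K
    · rw [if_pos hpK]
      exact factor_bound_small ε hε p _ hp2
    · rw [if_neg hpK, one_mul]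
      apply factor_bound_large ε hε p _
      have : K < p := Nat.lt_of_not_le hpK
      calc (2 : ℝ) ^ (1 / ε) ≤ (K : ℝ) + 1 := by
            have := Nat.le_ceil ((2 : ℝ) ^ (1 / ε)); rw [← hK] at this; linarith
        _ ≤ (p : ℝ) := by exact_mod_cast Nat.succ_le_of_lt this
  -- combine
  have hprod : (n.divisors.card : ℝ)
      ≤ (∏ p ∈ n.primeFactors, (if p ≤ K then B else 1)) * (n : ℝ) ^ ε := by
    rw [hτ, hnε, ← Finset.prod_mul_distrib]
    exact Finset.prod_le_prod (fun p _ => by positivity) hpoint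
  have hcard : (n.primeFactors.filter (· ≤ K)).card ≤ K + 1 := by
    calc (n.primeFactors.filter (· ≤ K)).card ≤ (Finset.range (K + 1)).card := by
          apply Finset.card_le_card
          intro p hp
          rw [Finset.mem_range]
          exact Nat.lt_succ_of_le (Finset.mem_filter.mp hp).2
      _ = K + 1 := Finset.card_range _
  have hBprod : (∏ p ∈ n.primeFactors, (if p ≤ K then B else 1)) ≤ B ^ (K + 1) := by
    calc (∏ p ∈ n.primeFactors, (if p ≤ K then B else 1))
        = ∏ p ∈ n.primeFactors.filter (· ≤ K), B := by
          rw [← Finset.prod_filter_mul_prod_filter_not n.primeFactors (· ≤ K)]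
          have h2 : ∏ p ∈ n.primeFactors.filter (fun p => ¬ p ≤ K), (if p ≤ K then B else 1)
              = 1 := Finset.prod_eq_one (fun p hp => if_neg (Finset.mem_filter.mp hp).2)
          rw [h2, mul_one]
          apply Finset.prod_congr rfl
          intro p hp
          exact if_pos (Finset.mem_filter.mp hp).2
      _ = B ^ (n.primeFactors.filter (· ≤ K)).card := Finset.prod_const B
      _ ≤ B ^ (K + 1) := pow_le_pow_right₀ hB1 hcard
  calc ((n.divisors.card : ℝ))
      ≤ (∏ p ∈ n.primeFactors, (if p ≤ K then B else 1)) * (n : ℝ) ^ ε := hprod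
    _ ≤ B ^ (K + 1) * (n : ℝ) ^ ε :=
        mul_le_mul_of_nonneg_right hBprod (Real.rpow_nonneg (Nat.cast_nonneg n) ε)

lemma card_mult (q e : ℕ) [NeZero q] (he : e ∣ q) (he0 : 0 < e) :
    (Finset.univ.filter (fun t : ZMod q => ((e : ZMod q) ∣ t))).card = q / e := by
  have hq0 : 0 < q := Nat.pos_of_ne_zero (NeZero.ne q)
  rw [← Finset.card_range (q / e)]
  symm
  apply Finset.card_bij (fun k _ => ((e * k : ℕ) : ZMod q))
  · intro k hk
    simp only [mem_filter, mem_univ, true_and]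
    exact ⟨(k : ZMod q), by push_cast; ring⟩
  · intro k hk k' hk' hkk
    simp only [mem_range] at hk hk'
    have hlt : ∀ j : ℕ, j < q / e → e * j < q := by
      intro j hj
      calc e * j < e * (q / e) := (Nat.mul_lt_mul_left he0).mpr hj
        _ = q := Nat.mul_div_cancel' he
    have := hkk
    rw [ZMod.natCast_eq_natCast_iff'] at this
    rw [Nat.mod_eq_of_lt (hlt k hk), Nat.mod_eq_of_lt (hlt k' hk')] at this
    exact Nat.eq_of_mul_eq_mul_left he0 this
  · intro t ht
    simp only [mem_filter, mem_univ, true_and] at ht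
    obtain ⟨s, hs⟩ := ht
    have hdvd : e ∣ t.val := by
      have : ((t.val : ℕ) : ZMod e) = 0 := by
        have hcast : (ZMod.castHom he (ZMod e)) t = 0 := by
          rw [hs, map_mul]
          simp
        rwa [ZMod.castHom_apply, ← ZMod.natCast_val] at hcast
      exact (ZMod.natCast_eq_zero_iff _ _).mp this
    refine ⟨t.val / e, ?_, ?_⟩
    · rw [mem_range]
      exact Nat.div_lt_div_of_lt_of_dvd he (ZMod.val_lt t)
    · rw [Nat.mul_div_cancel' hdvd, ZMod.natCast_val, ZMod.cast_id]

lemma vanish (q : ℕ) [NeZero q] (χ : DirichletCharacter ℂ q) (hχ : χ.IsPrimitive)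
    (e : ℕ) (a : ZMod q) (hne : a * (e : ZMod q) ≠ 0) :
    ∑ t ∈ Finset.univ.filter (fun t : ZMod q => ((e : ZMod q) ∣ t)), χ (1 + a * t) = 0 := by
  set b : ZMod q := a * (e : ZMod q) with hb
  have hbv : 0 < b.val := by
    rcases Nat.eq_zero_or_pos b.val with h | h
    · exact absurd ((ZMod.val_eq_zero _).mp h) hne
    · exact h
  set g : ℕ := Nat.gcd b.val q with hg
  have hgq : g ∣ q := Nat.gcd_dvd_right _ _
  have hglt : g < q := lt_of_le_of_lt (Nat.le_of_dvd hbv (Nat.gcd_dvd_left _ _)) (ZMod.val_lt b)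
  -- get a unit u ≡ 1 mod g with χ u ≠ 1
  have hnf : ¬ (MonoidHom.ker (ZMod.unitsMap hgq) ≤ MonoidHom.ker χ.toUnitHom) := by
    intro H
    have h1 : χ.FactorsThrough g :=
      (DirichletCharacter.factorsThrough_iff_ker_unitsMap hgq).mpr H
    have h2 : χ.conductor ≤ g := Nat.sInf_le h1
    rw [hχ] at h2
    omega
  obtain ⟨u, hu1, hu2⟩ := SetLike.not_le_iff_exists.mp hnf
  have hu1' : ZMod.unitsMap hgq u = 1 := hu1
  have hchi : χ ↑u ≠ 1 := by
    intro H
    apply hu2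
    have : χ.toUnitHom u = 1 := by
      ext
      rw [MulChar.coe_toUnitHom]
      simpa using H
    exact this
  -- (g : ℤ) ∣ u.val.val - 1
  have hu' : (g : ℤ) ∣ ((u : ZMod q).val : ℤ) - 1 := by
    rw [← Units.val_inj, Units.val_one, ZMod.unitsMap_def, Units.coe_map] at hu1'
    have h2 : ZMod.castHom hgq (ZMod g) (u : ZMod q) = (((u : ZMod q).val : ℤ) : ZMod g) := by
      simp
    rw [MonoidHom.coe_coe, h2, ← Int.cast_one, ZMod.intCast_eq_intCast_iff_dvd_sub] at hu1'
    simpa [neg_sub] using dvd_neg.mpr hu1'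
  obtain ⟨k, hk⟩ := hu'
  -- Bezout
  set X : ℤ := Nat.gcdA b.val q with hX
  have hbez : (g : ℤ) = (b.val : ℤ) * X + (q : ℤ) * Nat.gcdB b.val q := Nat.gcd_eq_gcd_ab b.val q
  set s : ZMod q := ((X * k : ℤ) : ZMod q) with hs
  have hbs : (↑u : ZMod q) = 1 + b * s := by
    have h3 : (((u : ZMod q).val : ℤ) : ZMod q) = (u : ZMod q) := by
      simp [ZMod.intCast_cast, ZMod.natCast_val, ZMod.cast_id]
    have h4 : ((b.val : ℕ) : ZMod q) = b := by
      simp [ZMod.natCast_val, ZMod.cast_id]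
    have h5 : (((u : ZMod q).val : ℤ) - 1 : ℤ)
        = (b.val : ℤ) * (X * k) + (q : ℤ) * (Nat.gcdB b.val q * k) := by
      rw [hk, hbez]; ring
    have h6 : ((((u : ZMod q).val : ℤ) - 1 : ℤ) : ZMod q) = b * s := by
      rw [h5]
      push_cast
      rw [ZMod.natCast_self, zero_mul, add_zero, h4, hs]
      push_cast
      ring
    have h7 : ((((u : ZMod q).val : ℤ) - 1 : ℤ) : ZMod q) = (u : ZMod q) - 1 := by
      rw [Int.cast_sub, Int.cast_one, h3]
    have h8 : (u : ZMod q) - 1 = b * s := h7.symm.trans h6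
    rw [← h8]; ring
  -- the bijection
  set F := Finset.univ.filter (fun t : ZMod q => ((e : ZMod q) ∣ t)) with hF
  set c : ZMod q := (e : ZMod q) * s with hc
  have key : ∑ t ∈ F, χ (1 + a * t) = χ ↑u * ∑ t ∈ F, χ (1 + a * t) := by
    rw [Finset.mul_sum]
    refine Finset.sum_nbij' (fun t => (↑u⁻¹ : ZMod q) * (t - c)) (fun t => (↑u : ZMod q) * t + c)
      ?_ ?_ ?_ ?_ ?_
    · intro t ht
      simp only [hF, mem_filter, mem_univ, true_and] at ht ⊢
      obtain ⟨r, hr⟩ := ht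
      exact ⟨(↑u⁻¹ : ZMod q) * (r - s), by rw [hr, hc]; ring⟩
    · intro t ht
      simp only [hF, mem_filter, mem_univ, true_and] at ht ⊢
      obtain ⟨r, hr⟩ := ht
      exact ⟨(↑u : ZMod q) * r + s, by rw [hr, hc]; ring⟩
    · intro t _
      have huu : (↑u : ZMod q) * (↑u⁻¹ : ZMod q) = 1 := by
        rw [← Units.val_mul, mul_inv_cancel, Units.val_one]
      linear_combination (t - c) * huu
    · intro t _
      have huu : (↑u⁻¹ : ZMod q) * (↑u : ZMod q) = 1 := by
        rw [← Units.val_mul, inv_mul_cancel, Units.val_one]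
      linear_combination t * huu
    · intro t _
      have huu : (↑u : ZMod q) * (↑u⁻¹ : ZMod q) = 1 := by
        rw [← Units.val_mul, mul_inv_cancel, Units.val_one]
      rw [← map_mul]
      congr 1
      have expand : (↑u : ZMod q) * (1 + a * ((↑u⁻¹ : ZMod q) * (t - c)))
          = (↑u : ZMod q) + a * (t - c) := by
        linear_combination a * (t - c) * huu
      rw [expand, hbs, hc, hb]
      ring
  have h9 : (χ ↑u - 1) * ∑ t ∈ F, χ (1 + a * t) = 0 := by
    rw [sub_mul, one_mul, ← key, sub_self]
  rcases mul_eq_zero.mp h9 with h | h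
  · exact absurd (sub_eq_zero.mp h) hchi
  · exact h

-- helper: sum over ZMod q of χ(α+a)conj(χ α) equals sum over units of χ(1+a u)
lemma step_a (q : ℕ) [NeZero q] (χ : DirichletCharacter ℂ q) (a : ZMod q) :
    (∑ α : ZMod q, χ (α + a) * (starRingEnd ℂ) (χ α))
      = ∑ t ∈ Finset.univ.filter (fun t : ZMod q => IsUnit t), χ (1 + a * t) := by
  -- restrict to units
  have h1 : (∑ α : ZMod q, χ (α + a) * (starRingEnd ℂ) (χ α))
      = ∑ α ∈ Finset.univ.filter (fun t : ZMod q => IsUnit t),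
          χ (α + a) * (starRingEnd ℂ) (χ α) := by
    symm
    apply Finset.sum_subset (Finset.subset_univ _)
    intro x _ hx
    simp only [mem_filter, mem_univ, true_and] at hx
    rw [χ.map_nonunit hx, map_zero, mul_zero]
  rw [h1]
  -- convert to sum over units
  have h2 : ∀ u : (ZMod q)ˣ, χ (↑u + a) * (starRingEnd ℂ) (χ ↑u) = χ (1 + a * ↑u⁻¹) := by
    intro u
    have hn : ‖χ ↑u‖ = 1 := by
      exact χ.unit_norm_eq_one u
    have hc : (starRingEnd ℂ) (χ ↑u) = (χ ↑u)⁻¹ := (Complex.inv_eq_conj hn).symm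
    have hne : χ ↑u ≠ 0 := by
      intro H; rw [H] at hn; simp at hn
    have huu : (↑u⁻¹ : ZMod q) * (↑u : ZMod q) = 1 := by
      rw [← Units.val_mul, inv_mul_cancel, Units.val_one]
    have hmul : χ (↑u + a) = χ (1 + a * ↑u⁻¹) * χ ↑u := by
      rw [← map_mul]
      congr 1
      linear_combination (-a) * huu
    rw [hc, hmul, mul_inv_cancel_right₀ hne]
  -- biject filter with units
  have h3 : ∑ α ∈ Finset.univ.filter (fun t : ZMod q => IsUnit t),
        χ (α + a) * (starRingEnd ℂ) (χ α)
      = ∑ u : (ZMod q)ˣ, χ (↑u + a) * (starRingEnd ℂ) (χ ↑u) := by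
    symm
    apply Finset.sum_bij (fun (u : (ZMod q)ˣ) _ => (↑u : ZMod q))
    · intro u _; simp [Units.isUnit]
    · intro u _ v _ h; exact Units.ext h
    · intro α hα
      simp only [mem_filter, mem_univ, true_and] at hα
      exact ⟨hα.unit, Finset.mem_univ _, rfl⟩
    · intro u _; rfl
  rw [h3]
  have h4 : ∑ u : (ZMod q)ˣ, χ (↑u + a) * (starRingEnd ℂ) (χ ↑u)
      = ∑ u : (ZMod q)ˣ, χ (1 + a * ↑u) := by
    rw [Fintype.sum_congr _ _ h2]
    exact Fintype.sum_equiv (Equiv.inv (ZMod q)ˣ) _ _ (fun u => rfl)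
  rw [h4]
  apply Finset.sum_bij (fun (u : (ZMod q)ˣ) _ => (↑u : ZMod q))
  · intro u _; simp [Units.isUnit]
  · intro u _ v _ h; exact Units.ext h
  · intro α hα
    simp only [mem_filter, mem_univ, true_and] at hα
    exact ⟨hα.unit, Finset.mem_univ _, by rw [IsUnit.unit_spec]⟩
  · intro u _; rfl

lemma dvd_val_iff (q e : ℕ) [NeZero q] (he : e ∣ q) (t : ZMod q) :
    e ∣ t.val ↔ (e : ZMod q) ∣ t := by
  constructor
  · rintro ⟨m, hm⟩
    refine ⟨(m : ZMod q), ?_⟩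
    have ht : t = ((t.val : ℕ) : ZMod q) := by simp [ZMod.natCast_val, ZMod.cast_id]
    rw [ht, hm]; push_cast; ring
  · rintro ⟨s, hs⟩
    have h0 : ((t.val : ℕ) : ZMod e) = 0 := by
      have hcast : (ZMod.castHom he (ZMod e)) t = 0 := by rw [hs, map_mul]; simp
      rwa [ZMod.castHom_apply, ← ZMod.natCast_val] at hcast
    exact (ZMod.natCast_eq_zero_iff _ _).mp h0

lemma indicator_moebius (q : ℕ) [NeZero q] (t : ZMod q) :
    (if IsUnit t then (1 : ℂ) else 0)
      = ∑ e ∈ q.divisors.filter (· ∣ t.val), ((ArithmeticFunction.moebius e : ℤ) : ℂ) := by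
  have hq0 : q ≠ 0 := NeZero.ne q
  have hg0 : Nat.gcd t.val q ≠ 0 := fun h => hq0 (Nat.eq_zero_of_gcd_eq_zero_right h)
  have hset : q.divisors.filter (· ∣ t.val) = (Nat.gcd t.val q).divisors := by
    ext e
    simp only [Finset.mem_filter, Nat.mem_divisors, Nat.dvd_gcd_iff]
    constructor
    · rintro ⟨⟨h1, h2⟩, h3⟩; exact ⟨⟨h3, h1⟩, hg0⟩
    · rintro ⟨⟨h1, h2⟩, h3⟩; exact ⟨⟨h2, hq0⟩, h1⟩
  rw [hset]
  have key : ∑ e ∈ (Nat.gcd t.val q).divisors, ArithmeticFunction.moebius e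
      = if Nat.gcd t.val q = 1 then 1 else 0 := by
    have h : ((ArithmeticFunction.moebius * ↑ArithmeticFunction.zeta : ArithmeticFunction ℤ))
        (Nat.gcd t.val q) = (1 : ArithmeticFunction ℤ) (Nat.gcd t.val q) := by
      rw [ArithmeticFunction.moebius_mul_coe_zeta]
    rwa [ArithmeticFunction.coe_mul_zeta_apply, ArithmeticFunction.one_apply] at h
  have hiu : IsUnit t ↔ Nat.gcd t.val q = 1 := by
    have ht : t = ((t.val : ℕ) : ZMod q) := by simp [ZMod.natCast_val, ZMod.cast_id]
    conv_lhs => rw [ht]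
    rw [ZMod.isUnit_iff_coprime]
  have := congrArg (fun z : ℤ => (z : ℂ)) key
  simp only [Int.cast_sum] at this
  rw [this]
  split_ifs with h1 h2 h3
  · simp
  · exact absurd (hiu.mp h1) h2
  · exact absurd (hiu.mpr h3) h1
  · simp

lemma step_b (q : ℕ) [NeZero q] (χ : DirichletCharacter ℂ q) (a : ZMod q) :
    ∑ t ∈ Finset.univ.filter (fun t : ZMod q => IsUnit t), χ (1 + a * t)
      = ∑ e ∈ q.divisors, ((ArithmeticFunction.moebius e : ℤ) : ℂ) *
          ∑ t ∈ Finset.univ.filter (fun t : ZMod q => ((e : ZMod q) ∣ t)), χ (1 + a * t) := by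
  rw [Finset.sum_filter]
  have h1 : ∀ t : ZMod q, (if IsUnit t then χ (1 + a * t) else 0)
      = ∑ e ∈ q.divisors, (if e ∣ t.val
          then ((ArithmeticFunction.moebius e : ℤ) : ℂ) * χ (1 + a * t) else 0) := by
    intro t
    calc (if IsUnit t then χ (1 + a * t) else 0)
        = (if IsUnit t then (1 : ℂ) else 0) * χ (1 + a * t) := by split_ifs <;> simp
      _ = (∑ e ∈ q.divisors.filter (· ∣ t.val),
            ((ArithmeticFunction.moebius e : ℤ) : ℂ)) * χ (1 + a * t) := by
          rw [indicator_moebius]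
      _ = ∑ e ∈ q.divisors.filter (· ∣ t.val),
            ((ArithmeticFunction.moebius e : ℤ) : ℂ) * χ (1 + a * t) := Finset.sum_mul _ _ _
      _ = _ := Finset.sum_filter _ _
  simp_rw [h1]
  rw [Finset.sum_comm]
  apply Finset.sum_congr rfl
  intro e he
  obtain ⟨hedvd, _⟩ := Nat.mem_divisors.mp he
  rw [Finset.mul_sum]
  rw [← Finset.sum_filter]
  apply Finset.sum_congr
  · apply Finset.filter_congr
    intro t _
    exact dvd_val_iff q e hedvd t
  · intro t _; rfl

lemma shift_bound (q : ℕ) [NeZero q] (χ : DirichletCharacter ℂ q) (hχ : χ.IsPrimitive)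
    (a : ZMod q) :
    ‖∑ α : ZMod q, χ (α + a) * (starRingEnd ℂ) (χ α)‖ ≤
      ∑ e ∈ q.divisors, (if a * (e : ZMod q) = 0 then ((q / e : ℕ) : ℝ) else 0) := by
  rw [step_a, step_b]
  refine le_trans (norm_sum_le _ _) (Finset.sum_le_sum ?_)
  intro e he
  obtain ⟨hedvd, hq0⟩ := Nat.mem_divisors.mp he
  have he0 : 0 < e := Nat.pos_of_mem_divisors he
  by_cases hz : a * (e : ZMod q) = 0
  · rw [if_pos hz]
    have hval : ∀ t ∈ Finset.univ.filter (fun t : ZMod q => ((e : ZMod q) ∣ t)),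
        χ (1 + a * t) = 1 := by
      intro t ht
      simp only [Finset.mem_filter, Finset.mem_univ, true_and] at ht
      obtain ⟨r, hr⟩ := ht
      rw [hr, show a * ((e : ZMod q) * r) = a * (e : ZMod q) * r by ring, hz, zero_mul,
        add_zero, map_one]
    rw [Finset.sum_congr rfl hval, Finset.sum_const, card_mult q e hedvd he0, nsmul_eq_mul,
      mul_one, norm_mul]
    have hmu : ‖((ArithmeticFunction.moebius e : ℤ) : ℂ)‖ ≤ 1 := by
      rcases ArithmeticFunction.moebius_eq_or e with h | h | h <;> simp [h]
    calc ‖((ArithmeticFunction.moebius e : ℤ) : ℂ)‖ * ‖((q / e : ℕ) : ℂ)‖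
        ≤ 1 * ((q / e : ℕ) : ℝ) := by
          rw [Complex.norm_natCast]
          exact mul_le_mul_of_nonneg_right hmu (Nat.cast_nonneg _)
      _ = ((q / e : ℕ) : ℝ) := one_mul _
  · rw [if_neg hz, vanish q χ hχ e a hz, mul_zero, norm_zero]

lemma count_h (m : ℕ) (hm : 0 < m) (A : ℝ) (hA : 1 ≤ A) :
    ((((Finset.Icc (-⌊A⌋) ⌊A⌋).erase 0).filter (fun h : ℤ => (m : ℤ) ∣ h)).card : ℝ)
      ≤ 2 * A / m := by
  set K : ℤ := ⌊A⌋ / m with hK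
  have hmz : (0 : ℤ) < m := by exact_mod_cast hm
  have hA0 : (0 : ℤ) ≤ ⌊A⌋ := by positivity
  have hK0 : 0 ≤ K := Int.ediv_nonneg hA0 hmz.le
  have hsub : (((Finset.Icc (-⌊A⌋) ⌊A⌋).erase 0).filter (fun h : ℤ => (m : ℤ) ∣ h))
      ⊆ ((Finset.Icc (-K) K).erase 0).image (fun k => k * m) := by
    intro h hh
    simp only [mem_filter, mem_erase, mem_Icc] at hh
    obtain ⟨⟨h0, hlo, hhi⟩, k, hk⟩ := hh
    refine mem_image.mpr ⟨k, ?_, ?_⟩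
    · simp only [mem_erase, mem_Icc]
      refine ⟨?_, ?_, ?_⟩
      · rintro rfl; simp at hk; exact h0 hk
      · have : (-k) * m ≤ ⌊A⌋ := by rw [hk] at hlo; linarith [hlo]
        have := (Int.le_ediv_iff_mul_le hmz).mpr this
        linarith
      · have : k * m ≤ ⌊A⌋ := by rw [hk] at hhi; linarith [hhi]
        exact (Int.le_ediv_iff_mul_le hmz).mpr this
    · rw [hk]; ring
  have hcard : (((Finset.Icc (-⌊A⌋) ⌊A⌋).erase 0).filter (fun h : ℤ => (m : ℤ) ∣ h)).card
      ≤ ((Finset.Icc (-K) K).erase 0).card := by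
    refine (Finset.card_le_card hsub).trans (Finset.card_image_le)
  have hcard2 : ((Finset.Icc (-K) K).erase 0).card = (2 * K).toNat := by
    rw [Finset.card_erase_of_mem (by simp [hK0]), Int.card_Icc]
    omega
  have hKA : (K : ℝ) ≤ A / m := by
    rw [le_div_iff₀ (by exact_mod_cast hm)]
    have h1 : K * m ≤ ⌊A⌋ := Int.ediv_mul_le _ hmz.ne'
    have h2 : (⌊A⌋ : ℝ) ≤ A := Int.floor_le A
    calc ((K : ℝ) * m) = ((K * m : ℤ) : ℝ) := by push_cast; ring
    _ ≤ ((⌊A⌋ : ℤ) : ℝ) := by exact_mod_cast h1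
    _ ≤ A := h2
  calc (((((Finset.Icc (-⌊A⌋) ⌊A⌋).erase 0).filter (fun h : ℤ => (m : ℤ) ∣ h)).card : ℝ))
      ≤ (((2 * K).toNat : ℤ) : ℝ) := by rw [← hcard2]; exact_mod_cast hcard
    _ = 2 * (K : ℝ) := by rw [Int.toNat_of_nonneg (by linarith)]; push_cast; ring
    _ ≤ 2 * (A / m) := by linarith
    _ = 2 * A / m := by ring
lemma dvd_equiv (q c : ℕ) (hq : 0 < q) (hc : 0 < c) (h : ℤ) :
    (q : ℤ) ∣ h * c ↔ ((q / Nat.gcd q c : ℕ) : ℤ) ∣ h := by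
  set g := Nat.gcd q c with hg
  have hg0 : 0 < g := Nat.gcd_pos_of_pos_left _ hq
  set m := q / g with hm
  set w := c / g with hw
  have hqm : q = m * g := (Nat.div_mul_cancel (Nat.gcd_dvd_left q c)).symm
  have hcw : c = w * g := (Nat.div_mul_cancel (Nat.gcd_dvd_right q c)).symm
  have hcop : IsCoprime (m : ℤ) (w : ℤ) :=
    Int.isCoprime_iff_gcd_eq_one.mpr (by
      simpa [Int.gcd_natCast_natCast] using Nat.coprime_div_gcd_div_gcd hg0)
  constructor
  · intro H
    have H2 : (m : ℤ) * g ∣ (h * w) * g := by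
      have : h * c = (h * w) * g := by push_cast [hcw]; ring
      rw [this] at H
      exact_mod_cast (by exact_mod_cast hqm ▸ H : ((m * g : ℕ) : ℤ) ∣ (h * w) * g)
    have H3 : (m : ℤ) ∣ h * w := by
      have hgz : (g : ℤ) ≠ 0 := by exact_mod_cast hg0.ne'
      exact (mul_dvd_mul_iff_right hgz).mp H2
    exact hcop.dvd_of_dvd_mul_right H3
  · intro H
    have : (q : ℤ) = m * g := by exact_mod_cast hqm
    rw [this]
    have : h * c = (h * w) * g := by push_cast [hcw]; ring
    rw [this]
    exact mul_dvd_mul (H.trans (Dvd.intro _ rfl)) dvd_rfl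
/-- Heath-Brown's bound for averages of shifted character sums at frequency zero
(Lemma 4.3, second bound). -/
theorem heath_brown_shifted_character_sums_zero_frequency :
    ∀ ε : ℝ, 0 < ε → ∃ C : ℝ, 0 < C ∧
      ∀ (q q₀ : ℕ) (hq : Odd q), q₀ ∣ q → 0 < q₀ →
      ∀ (χ : DirichletCharacter ℂ q), χ.IsPrimitive →
      ∀ A : ℝ, 1 ≤ A →
        haveI : NeZero q := ⟨hq.pos.ne'⟩
        (∑ h ∈ (Finset.Icc (-⌊A⌋) ⌊A⌋).erase 0,
            ‖∑ α : ZMod q,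
              χ (α + ((h * q₀ : ℤ) : ZMod q)) * (starRingEnd ℂ) (χ α)‖)
          ≤ C * (q₀ : ℝ) * A * (q : ℝ) ^ ε := by
  intro ε hε
  obtain ⟨C₀, hC₀, hdiv⟩ := div_bound ε hε
  refine ⟨2 * C₀, by linarith, ?_⟩
  intro q q₀ hq hdvd hq₀ χ hχ A hA
  haveI : NeZero q := ⟨hq.pos.ne'⟩
  have hqpos : 0 < q := hq.pos
  have hA0 : (0 : ℝ) < A := lt_of_lt_of_le one_pos hA
  set E := (Finset.Icc (-⌊A⌋) ⌊A⌋).erase 0 with hE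
  -- step 1: apply shift_bound for each h
  have step1 : (∑ h ∈ E, ‖∑ α : ZMod q,
        χ (α + ((h * q₀ : ℤ) : ZMod q)) * (starRingEnd ℂ) (χ α)‖)
      ≤ ∑ h ∈ E, ∑ e ∈ q.divisors,
          (if ((h * q₀ : ℤ) : ZMod q) * (e : ZMod q) = 0 then ((q / e : ℕ) : ℝ) else 0) :=
    Finset.sum_le_sum (fun h _ => shift_bound q χ hχ _)
  refine le_trans step1 ?_
  rw [Finset.sum_comm]
  -- step 2: bound each e-term
  have step2 : ∀ e ∈ q.divisors,
      (∑ h ∈ E, (if ((h * q₀ : ℤ) : ZMod q) * (e : ZMod q) = 0 then ((q / e : ℕ) : ℝ) else 0))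
        ≤ 2 * A * q₀ := by
    intro e he
    obtain ⟨hedvd, -⟩ := Nat.mem_divisors.mp he
    have he0 : 0 < e := Nat.pos_of_mem_divisors he
    set g : ℕ := Nat.gcd q (q₀ * e) with hg
    have hg0 : 0 < g := Nat.gcd_pos_of_pos_left _ hqpos
    set m : ℕ := q / g with hm
    have hm0 : 0 < m := Nat.div_pos (Nat.le_of_dvd hqpos (Nat.gcd_dvd_left _ _)) hg0
    have hcond : ∀ h : ℤ, (((h * q₀ : ℤ) : ZMod q) * (e : ZMod q) = 0) ↔ ((m : ℤ) ∣ h) := by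
      intro h
      have h1 : ((h * q₀ : ℤ) : ZMod q) * (e : ZMod q) = ((h * (q₀ * e) : ℤ) : ZMod q) := by
        push_cast; ring
      rw [h1, ZMod.intCast_zmod_eq_zero_iff_dvd]
      exact dvd_equiv q (q₀ * e) hqpos (by positivity) h
    calc (∑ h ∈ E, (if ((h * q₀ : ℤ) : ZMod q) * (e : ZMod q) = 0 then ((q / e : ℕ) : ℝ) else 0))
        = ∑ h ∈ E.filter (fun h : ℤ => (m : ℤ) ∣ h), ((q / e : ℕ) : ℝ) := by
          rw [← Finset.sum_filter]
          apply Finset.sum_congr _ (fun _ _ => rfl)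
          apply Finset.filter_congr
          intro h _
          exact hcond h
      _ = ((E.filter (fun h : ℤ => (m : ℤ) ∣ h)).card : ℝ) * ((q / e : ℕ) : ℝ) := by
          rw [Finset.sum_const, nsmul_eq_mul]
      _ ≤ (2 * A / m) * ((q / e : ℕ) : ℝ) := by
          apply mul_le_mul_of_nonneg_right (count_h m hm0 A hA) (Nat.cast_nonneg _)
      _ ≤ 2 * A * q₀ := by
          -- (q/e) ≤ q₀ * m
          have hkey : q / e ≤ q₀ * m := by
            have h1 : (q / e) * g ≤ (q / e) * (q₀ * e) :=
              Nat.mul_le_mul_left _ (Nat.le_of_dvd (by positivity) (Nat.gcd_dvd_right _ _))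
            have h2 : (q / e) * (q₀ * e) = q₀ * q := by
              rw [show (q / e) * (q₀ * e) = q₀ * ((q / e) * e) by ring,
                Nat.div_mul_cancel hedvd]
            have h3 : q₀ * q = (q₀ * m) * g := by
              rw [show (q₀ * m) * g = q₀ * (m * g) by ring, hm,
                Nat.div_mul_cancel (Nat.gcd_dvd_left _ _)]
            have h4 : (q / e) * g ≤ (q₀ * m) * g := by rw [← h3, ← h2]; exact h1
            exact Nat.le_of_mul_le_mul_right h4 hg0
          have hkey' : ((q / e : ℕ) : ℝ) ≤ (q₀ : ℝ) * m := by exact_mod_cast hkey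
          have hmR : (0 : ℝ) < m := by exact_mod_cast hm0
          rw [div_mul_eq_mul_div, div_le_iff₀ hmR]
          calc 2 * A * ((q / e : ℕ) : ℝ) ≤ 2 * A * ((q₀ : ℝ) * m) := by
                apply mul_le_mul_of_nonneg_left hkey' (by linarith)
            _ = 2 * A * q₀ * m := by ring
  calc (∑ e ∈ q.divisors, ∑ h ∈ E,
        (if ((h * q₀ : ℤ) : ZMod q) * (e : ZMod q) = 0 then ((q / e : ℕ) : ℝ) else 0))
      ≤ ∑ e ∈ q.divisors, 2 * A * q₀ := Finset.sum_le_sum step2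
    _ = (q.divisors.card : ℝ) * (2 * A * q₀) := by rw [Finset.sum_const, nsmul_eq_mul]
    _ ≤ (C₀ * (q : ℝ) ^ ε) * (2 * A * q₀) := by
        apply mul_le_mul_of_nonneg_right (hdiv q hqpos.ne') (by positivity)
    _ = 2 * C₀ * (q₀ : ℝ) * A * (q : ℝ) ^ ε := by ring
end
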